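/- arXiv:0707.3467 — 5 statements merged into one kernel-verified Lean document; each statement's English description precedes it below -/
import Mathlib

section
/- Let n ≥ 1 and let ρ : ℝ × ℝⁿ → ℝ (ρ ≥ 0) and v : ℝ × ℝⁿ → ℝⁿ be C¹ functions satisfying pointwise the continuity equation ∂_t ρ + div_x(ρv) = 0. Let φ : ℝⁿ → ℝ be a C¹ radial function, φ(x) = ψ(|x|). Assume that for each t the functions x ↦ ρ(t,x)φ(x) and x ↦ ρ(t,x)(ψ'(|x|)/|x|)(v(t,x)·x) are integrable, that on each compact time interval |∂_t(ρφ)| is dominated by a fixed integrable function of x, and that there are R₀ > 0, ε > 0 and a continuous function C(t) with ρ(t,x)|v(t,x)||∇φ(x)| ≤ C(t)|x|^{−n+1−ε} and ρ(t,x)|v(t,x)||φ(x)| ≤ C(t)|x|^{−n+1−ε} for |x| > R₀. Then G_φ(t) := ∫_{ℝⁿ} ρ(t,x) φ(x) dx is differentiable in t and G_φ'(t) = ∫_{ℝⁿ} (ψ'(|x|)/|x|) (v(t,x)·x) ρ(t,x) dx. -/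
open MeasureTheory Real
open scoped RealInnerProductSpace
open Filter Set Topology

/-- Time partial derivative `∂_t f` of a function on `ℝ × ℝⁿ`. -/
noncomputable def pdT {n : ℕ} (f : ℝ × EuclideanSpace ℝ (Fin n) → ℝ) :
    ℝ × EuclideanSpace ℝ (Fin n) → ℝ :=
  fun q => deriv (fun s => f (s, q.2)) q.1

/-- Spatial partial derivative `∂_{x_i} f` of a function on `ℝ × ℝⁿ`. -/
noncomputable def pdX {n : ℕ} (f : ℝ × EuclideanSpace ℝ (Fin n) → ℝ) (i : Fin n) :
    ℝ × EuclideanSpace ℝ (Fin n) → ℝ :=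
  fun q => fderiv ℝ (fun y => f (q.1, y)) q.2 (EuclideanSpace.single i 1)

/-- Spatial divergence of a (time-dependent) vector field on `ℝ × ℝⁿ`. -/
noncomputable def divX {n : ℕ} (w : ℝ × EuclideanSpace ℝ (Fin n) → EuclideanSpace ℝ (Fin n)) :
    ℝ × EuclideanSpace ℝ (Fin n) → ℝ :=
  fun q => ∑ i, pdX (fun z => w z i) i q

private lemma coord_le_norm {m : ℕ} (z : EuclideanSpace ℝ (Fin m)) (i : Fin m) : |z i| ≤ ‖z‖ := by
  rw [EuclideanSpace.norm_eq, ← Real.sqrt_sq_eq_abs]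
  apply Real.sqrt_le_sqrt
  exact (Finset.single_le_sum (f := fun j => ‖z j‖^2) (fun j _ => sq_nonneg _)
    (Finset.mem_univ i)).trans_eq' (by rw [Real.norm_eq_abs, sq_abs])

theorem div_integral_zero {m : ℕ}
    (w : EuclideanSpace ℝ (Fin (m+1)) → EuclideanSpace ℝ (Fin (m+1)))
    (w' : EuclideanSpace ℝ (Fin (m+1)) → EuclideanSpace ℝ (Fin (m+1)) →L[ℝ] EuclideanSpace ℝ (Fin (m+1)))
    (hw : Continuous w) (hw' : ∀ x, HasFDerivAt w (w' x) x)
    (hint : Integrable (fun x => ∑ i, w' x (EuclideanSpace.single i 1) i))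
    {R₀ ε K : ℝ} (hR₀ : 0 < R₀) (hε : 0 < ε) (hK : 0 ≤ K)
    (hdec : ∀ x, R₀ < ‖x‖ → ‖w x‖ ≤ K * ‖x‖ ^ (-(m+1:ℝ) + 1 - ε)) :
    ∫ x, ∑ i, w' x (EuclideanSpace.single i 1) i = 0 := by
  classical
  set D : EuclideanSpace ℝ (Fin (m+1)) → ℝ := fun x => ∑ i, w' x (EuclideanSpace.single i 1) i with hD
  set L := EuclideanSpace.equiv (Fin (m+1)) ℝ with hL
  have hvol : MeasurePreserving ((MeasurableEquiv.toLp 2 (Fin (m+1) → ℝ)).symm).symm volume volume :=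
    (EuclideanSpace.volume_preserving_symm_measurableEquiv_toLp _).symm
  have hint' : Integrable (fun y : Fin (m+1) → ℝ => D (L.symm y)) :=
    (hvol.integrable_comp_emb
      ((MeasurableEquiv.toLp 2 (Fin (m+1) → ℝ)).symm).symm.measurableEmbedding).2 hint
  set f : (Fin (m+1) → ℝ) → (Fin (m+1) → ℝ) := fun y => L (w (L.symm y)) with hf
  set f' : (Fin (m+1) → ℝ) → (Fin (m+1) → ℝ) →L[ℝ] (Fin (m+1) → ℝ) :=
    fun y => (L : EuclideanSpace ℝ (Fin (m+1)) →L[ℝ] (Fin (m+1) → ℝ)).comp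
      ((w' (L.symm y)).comp (L.symm : (Fin (m+1) → ℝ) →L[ℝ] EuclideanSpace ℝ (Fin (m+1)))) with hf'
  have hfd : ∀ y, HasFDerivAt f (f' y) y := fun y =>
    (L.hasFDerivAt.comp _ ((hw' (L.symm y)).comp _ L.symm.hasFDerivAt))
  have hfc : Continuous f := L.continuous.comp (hw.comp L.symm.continuous)
  have hDiv : ∀ y, (∑ i, f' y (Pi.single i 1) i) = D (L.symm y) := fun y => rfl
  have hcexp : (-(m+1:ℝ) + 1 - ε) ≤ 0 := by
    have : (0:ℝ) ≤ m := Nat.cast_nonneg m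
    linarith
  have key : ∀ R : ℝ, R₀ < R →
      |∫ y in Icc (fun _ : Fin (m+1) => -R) (fun _ => R), D (L.symm y)|
        ≤ ((m+1) * (2 * (K * R ^ (-(m+1:ℝ) + 1 - ε) * (2*R)^m))) := by
    intro R hR
    have hR0 : (0:ℝ) < R := hR₀.trans hR
    have hle : (fun _ : Fin (m+1) => -R) ≤ fun _ => R := fun i => by simp; linarith
    have hbox := MeasureTheory.integral_divergence_of_hasFDerivAt_off_countable
      (fun _ => -R) (fun _ => R) hle f f' ∅ Set.countable_empty hfc.continuousOn
      (fun x _ => hfd x)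
      ((hint'.integrableOn).congr_fun (fun y _ => (hDiv y).symm) measurableSet_Icc)
    rw [setIntegral_congr_fun measurableSet_Icc (fun y _ => (hDiv y).symm), hbox]
    have hface : ∀ (i : Fin (m+1)) (c : ℝ), |c| = R →
        ‖∫ x in Icc ((fun _ : Fin (m+1) => -R) ∘ i.succAbove) ((fun _ : Fin (m+1) => R) ∘ i.succAbove),
            f (i.insertNth c x) i‖ ≤ K * R ^ (-(m+1:ℝ) + 1 - ε) * (2*R)^m := by
      intro i c hc
      have hfin : volume (Icc ((fun _ : Fin (m+1) => -R) ∘ i.succAbove)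
          ((fun _ : Fin (m+1) => R) ∘ i.succAbove)) = (ENNReal.ofReal (2*R))^m := by
        rw [Real.volume_Icc_pi]
        simp [two_mul, Finset.prod_const]
      have hlt : volume (Icc ((fun _ : Fin (m+1) => -R) ∘ i.succAbove)
          ((fun _ : Fin (m+1) => R) ∘ i.succAbove)) < ⊤ := by
        rw [hfin]; exact ENNReal.pow_lt_top ENNReal.ofReal_lt_top
      have hbound : ∀ x ∈ Icc ((fun _ : Fin (m+1) => -R) ∘ i.succAbove)
          ((fun _ : Fin (m+1) => R) ∘ i.succAbove),
          ‖f (i.insertNth c x) i‖ ≤ K * R ^ (-(m+1:ℝ) + 1 - ε) := by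
        intro x _
        set p : EuclideanSpace ℝ (Fin (m+1)) := L.symm (i.insertNth c x) with hp
        have hpi : p i = c := by
          show (i.insertNth c x : ∀ _ : Fin (m+1), ℝ) i = c
          simp
        have hnp : R ≤ ‖p‖ := by
          have h := coord_le_norm p i
          rw [hpi, hc] at h; exact h
        have h1 : ‖f (i.insertNth c x) i‖ ≤ ‖w p‖ := by
          have h2 : f (i.insertNth c x) i = w p i := rfl
          rw [h2, Real.norm_eq_abs]
          exact coord_le_norm (w p) i
        refine h1.trans ((hdec p (hR.trans_le hnp)).trans ?_)
        exact mul_le_mul_of_nonneg_left (Real.rpow_le_rpow_of_nonpos hR0 hnp hcexp) hK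
      have hmeas : AEStronglyMeasurable (fun x => f (i.insertNth c x) i)
          (volume.restrict (Icc ((fun _ : Fin (m+1) => -R) ∘ i.succAbove)
            ((fun _ : Fin (m+1) => R) ∘ i.succAbove))) :=
        (((continuous_apply i).comp (hfc.comp
          ((continuous_const).finInsertNth i continuous_id))).aestronglyMeasurable).restrict
      have := norm_setIntegral_le_of_norm_le_const (μ := volume) hlt hbound
      refine this.trans ?_
      rw [measureReal_def, hfin]
      rw [ENNReal.toReal_pow, ENNReal.toReal_ofReal (by linarith)]
    calc ‖∑ i : Fin (m+1), ((∫ x in Icc ((fun _ : Fin (m+1) => -R) ∘ i.succAbove) ((fun _ : Fin (m+1) => R) ∘ i.succAbove),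
            f (i.insertNth ((fun _ : Fin (m+1) => R) i) x) i)
          - ∫ x in Icc ((fun _ : Fin (m+1) => -R) ∘ i.succAbove) ((fun _ : Fin (m+1) => R) ∘ i.succAbove),
            f (i.insertNth ((fun _ : Fin (m+1) => -R) i) x) i)‖
        ≤ ∑ i : Fin (m+1), (K * R ^ (-(m+1:ℝ) + 1 - ε) * (2*R)^m + K * R ^ (-(m+1:ℝ) + 1 - ε) * (2*R)^m) := by
          refine (norm_sum_le _ _).trans (Finset.sum_le_sum fun i _ => ?_)
          refine (norm_sub_le _ _).trans ?_
          exact add_le_add (hface i R (abs_of_pos hR0)) (hface i (-R) (by rw [abs_neg, abs_of_pos hR0]))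
      _ = ((m+1) * (2 * (K * R ^ (-(m+1:ℝ) + 1 - ε) * (2*R)^m))) := by
          rw [Finset.sum_const, Finset.card_univ, Fintype.card_fin]
          push_cast; ring
  -- limit along growing boxes
  set Rk : ℕ → ℝ := fun k => R₀ + 1 + k with hRk
  have hRkl : ∀ k, R₀ < Rk k := fun k => by
    have : (0:ℝ) ≤ k := Nat.cast_nonneg k
    simp only [hRk]; linarith
  set S : ℕ → Set (Fin (m+1) → ℝ) := fun k => Icc (fun _ => -(Rk k)) (fun _ => Rk k) with hS
  have hSm : ∀ k, MeasurableSet (S k) := fun _ => measurableSet_Icc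
  have hSmono : Monotone S := by
    intro j k hjk
    have h1 : Rk j ≤ Rk k := by
      simp only [hRk]
      have := (Nat.cast_le (α := ℝ)).2 hjk
      linarith
    exact Icc_subset_Icc (fun i => by simp; linarith) (fun i => by simp; exact h1)
  have hSunion : ⋃ k, S k = univ := by
    ext y
    simp only [mem_iUnion, mem_univ, iff_true]
    obtain ⟨k, hk⟩ := exists_nat_ge ‖y‖
    have hyi : ∀ i, |y i| ≤ (k:ℝ) := fun i => by
      have h1 : |y i| ≤ ‖y‖ := by
        rw [← Real.norm_eq_abs]; exact norm_le_pi_norm y i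
      linarith
    refine ⟨k, fun i => ?_, fun i => ?_⟩ <;>
      · have := abs_le.1 (hyi i)
        simp only [hS, hRk]
        obtain ⟨h1, h2⟩ := this
        linarith
  have h1 : Tendsto (fun k => ∫ y in S k, D (L.symm y)) atTop (𝓝 (∫ y, D (L.symm y))) := by
    have := tendsto_setIntegral_of_monotone hSm hSmono (by rw [hSunion]; exact hint'.integrableOn)
    rwa [hSunion, setIntegral_univ] at this
  have h2 : Tendsto (fun k => ∫ y in S k, D (L.symm y)) atTop (𝓝 0) := by
    have hb : ∀ k, ‖∫ y in S k, D (L.symm y)‖ ≤ (2^(m+1) * ((m+1) * K)) * (Rk k) ^ (-ε) := by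
      intro k
      rw [Real.norm_eq_abs]
      refine (key (Rk k) (hRkl k)).trans_eq ?_
      have hRkpos : (0:ℝ) < Rk k := hR₀.trans (hRkl k)
      have hcomb : (Rk k) ^ (-(m+1:ℝ)+1-ε) * (Rk k)^(m:ℕ) = (Rk k)^(-ε) := by
        rw [← Real.rpow_natCast (Rk k) m, ← Real.rpow_add hRkpos]
        congr 1
        push_cast; ring
      calc (↑m + 1) * (2 * (K * Rk k ^ (-(m+1:ℝ)+1-ε) * (2 * Rk k) ^ m))
          = (2^(m+1) * (((m:ℝ)+1) * K)) * ((Rk k) ^ (-(m+1:ℝ)+1-ε) * (Rk k)^(m:ℕ)) := by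
            rw [mul_pow]; ring
        _ = _ := by rw [hcomb]
    refine squeeze_zero_norm hb ?_
    have h5 : Tendsto Rk atTop atTop :=
      tendsto_atTop_add_const_left _ _ tendsto_natCast_atTop_atTop
    have h6 := (tendsto_rpow_neg_atTop hε).comp h5
    simpa using h6.const_mul ((2:ℝ)^(m+1) * ((m+1) * K))
  have h3 : ∫ y, D (L.symm y) = 0 := tendsto_nhds_unique h1 h2
  have h4 : ∫ y, D (L.symm y) = ∫ x, D x :=
    hvol.integral_comp ((MeasurableEquiv.toLp 2 (Fin (m+1) → ℝ)).symm).symm.measurableEmbedding D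
  rw [← h4, h3]


lemma hasFDerivAt_norm' {n : ℕ} (x : EuclideanSpace ℝ (Fin n)) (hx : x ≠ 0) :
    HasFDerivAt (fun y : EuclideanSpace ℝ (Fin n) => ‖y‖) (‖x‖⁻¹ • innerSL ℝ x) x := by
  have hsq : HasFDerivAt (fun y : EuclideanSpace ℝ (Fin n) => ‖y‖^2)
      (2 • (innerSL ℝ x)) x := (hasStrictFDerivAt_norm_sq x).hasFDerivAt
  have hnx : ‖x‖ ≠ 0 := norm_ne_zero_iff.2 hx
  have hsqrt : HasDerivAt Real.sqrt (1 / (2 * Real.sqrt (‖x‖^2))) (‖x‖^2) :=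
    Real.hasDerivAt_sqrt (pow_ne_zero 2 hnx)
  have := hsqrt.comp_hasFDerivAt x hsq
  have heq : (Real.sqrt ∘ fun y : EuclideanSpace ℝ (Fin n) => ‖y‖^2) = fun y => ‖y‖ := by
    funext y; simp only [Function.comp_apply]; rw [Real.sqrt_sq (norm_nonneg y)]
  rw [heq] at this
  convert this using 1
  iterate 3 rfl
  rw [Real.sqrt_sq (norm_nonneg x)]
  ext ξ
  simp [smul_smul]
  field_simp

lemma radial_fderiv {n : ℕ} (hn : 1 ≤ n) (φ : EuclideanSpace ℝ (Fin n) → ℝ) (ψ : ℝ → ℝ)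
    (hφ : ContDiff ℝ 1 φ) (hφψ : ∀ x, φ x = ψ ‖x‖)
    (x : EuclideanSpace ℝ (Fin n)) (hx : x ≠ 0) (ξ : EuclideanSpace ℝ (Fin n)) :
    fderiv ℝ φ x ξ = (deriv ψ ‖x‖ / ‖x‖) * ⟪ξ, x⟫ := by
  have hr : (0:ℝ) < ‖x‖ := norm_pos_iff.2 hx
  set e : EuclideanSpace ℝ (Fin n) := EuclideanSpace.single ⟨0, hn⟩ 1 with he
  have hne : ‖e‖ = 1 := by rw [he, EuclideanSpace.norm_single, norm_one]
  set g : ℝ → ℝ := fun s => φ (s • e) with hg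
  have hgψ : ∀ s, 0 < s → g s = ψ s := by
    intro s hs
    rw [hg]
    simp only [hφψ, norm_smul, hne, mul_one, Real.norm_eq_abs, abs_of_pos hs]
  have hψg : ψ =ᶠ[𝓝 ‖x‖] g := by
    filter_upwards [IsOpen.mem_nhds isOpen_Ioi hr] with s hs
    exact (hgψ s hs).symm
  have hgd : HasDerivAt g (fderiv ℝ φ (‖x‖ • e) e) ‖x‖ := by
    have h1 : HasDerivAt (fun s : ℝ => s • e) e ‖x‖ := by
      simpa using (hasDerivAt_id ‖x‖).smul_const e
    exact ((hφ.differentiable one_ne_zero (‖x‖ • e)).hasFDerivAt).comp_hasDerivAt _ h1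
  have hψd : HasDerivAt ψ (deriv ψ ‖x‖) ‖x‖ := by
    have h2 : HasDerivAt ψ (fderiv ℝ φ (‖x‖ • e) e) ‖x‖ := hgd.congr_of_eventuallyEq hψg
    simpa [h2.deriv] using h2
  have hφd : HasFDerivAt φ (deriv ψ ‖x‖ • (‖x‖⁻¹ • innerSL ℝ x)) x := by
    have hcomp := hψd.comp_hasFDerivAt x (hasFDerivAt_norm' x hx)
    have : (fun y : EuclideanSpace ℝ (Fin n) => ψ ‖y‖) = φ := by
      funext y; rw [hφψ]
    rwa [← this]
  rw [hφd.fderiv]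
  simp only [ContinuousLinearMap.coe_smul', Pi.smul_apply, innerSL_apply_apply, smul_eq_mul]
  rw [real_inner_comm x ξ]
  field_simp



section pieces
variable {n : ℕ}

-- pdT of a C¹ function as fderiv evaluation
lemma pdT_eq_fderiv (f : ℝ × EuclideanSpace ℝ (Fin n) → ℝ) (hf : ContDiff ℝ 1 f)
    (q : ℝ × EuclideanSpace ℝ (Fin n)) :
    pdT f q = fderiv ℝ f q ((1:ℝ), (0 : EuclideanSpace ℝ (Fin n))) := by
  have h1 : HasDerivAt (fun s : ℝ => (s, q.2)) ((1:ℝ), (0 : EuclideanSpace ℝ (Fin n))) q.1 :=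
    (hasDerivAt_id q.1).prodMk (hasDerivAt_const q.1 q.2)
  have h2 := ((hf.differentiable one_ne_zero q).hasFDerivAt).comp_hasDerivAt q.1 h1
  exact h2.deriv

lemma pdT_continuous (f : ℝ × EuclideanSpace ℝ (Fin n) → ℝ) (hf : ContDiff ℝ 1 f) :
    Continuous (pdT f) := by
  have : Continuous (fun q : ℝ × EuclideanSpace ℝ (Fin n) =>
      fderiv ℝ f q ((1:ℝ), (0 : EuclideanSpace ℝ (Fin n)))) :=
    (hf.continuous_fderiv one_ne_zero).clm_apply continuous_const
  exact this.congr (fun q => (pdT_eq_fderiv f hf q).symm)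

end pieces

section pieces2
variable {n : ℕ}

lemma euclid_decomp (z : EuclideanSpace ℝ (Fin n)) :
    z = ∑ i, z i • EuclideanSpace.single i (1:ℝ) := by
  have := (EuclideanSpace.basisFun (Fin n) ℝ).sum_repr z
  simp only [EuclideanSpace.basisFun_repr, EuclideanSpace.basisFun_apply] at this
  exact this.symm

-- divergence of the product φ • u
lemma div_smul_eq (φ : EuclideanSpace ℝ (Fin n) → ℝ) (u : EuclideanSpace ℝ (Fin n) → EuclideanSpace ℝ (Fin n))
    (hφ : ContDiff ℝ 1 φ) (hu : ContDiff ℝ 1 u) (x : EuclideanSpace ℝ (Fin n)) :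
    ∑ i, fderiv ℝ (fun y => φ y • u y) x (EuclideanSpace.single i 1) i
      = φ x * (∑ i, fderiv ℝ u x (EuclideanSpace.single i 1) i) + fderiv ℝ φ x (u x) := by
  have hD : HasFDerivAt (fun y => φ y • u y)
      (φ x • (fderiv ℝ u x) + (fderiv ℝ φ x).smulRight (u x)) x :=
    ((hφ.differentiable one_ne_zero x).hasFDerivAt).smul ((hu.differentiable one_ne_zero x).hasFDerivAt)
  rw [hD.fderiv]
  have h2 : ∀ i : Fin n, (φ x • (fderiv ℝ u x) + (fderiv ℝ φ x).smulRight (u x))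
      (EuclideanSpace.single i 1) i
      = φ x * (fderiv ℝ u x (EuclideanSpace.single i 1) i)
        + fderiv ℝ φ x (EuclideanSpace.single i 1) * u x i := by
    intro i
    simp [ContinuousLinearMap.smulRight_apply, mul_comm]
  rw [Finset.sum_congr rfl (fun i _ => h2 i), Finset.sum_add_distrib, Finset.mul_sum]
  congr 1
  have h3 : fderiv ℝ φ x (u x) = fderiv ℝ φ x (∑ i, u x i • EuclideanSpace.single i (1:ℝ)) := by
    rw [← euclid_decomp (u x)]
  rw [h3, map_sum]
  refine Finset.sum_congr rfl (fun i _ => ?_)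
  rw [ContinuousLinearMap.map_smul]
  simp [mul_comm]

end pieces2


section main
variable {m : ℕ}

lemma vol_singleton_zero (x₀ : EuclideanSpace ℝ (Fin (m+1))) :
    volume ({x₀} : Set (EuclideanSpace ℝ (Fin (m+1)))) = 0 := by
  have hmp := EuclideanSpace.volume_preserving_symm_measurableEquiv_toLp (Fin (m+1))
  have h1 : ((MeasurableEquiv.toLp 2 (Fin (m+1) → ℝ)).symm) ⁻¹' {((MeasurableEquiv.toLp 2 (Fin (m+1) → ℝ)).symm) x₀} = {x₀} := by
    ext z
    simp only [Set.mem_preimage, Set.mem_singleton_iff, EmbeddingLike.apply_eq_iff_eq]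
  have h2 : volume ({((MeasurableEquiv.toLp 2 (Fin (m+1) → ℝ)).symm) x₀} : Set (Fin (m+1) → ℝ)) = 0 := by
    refine measure_mono_null (t := {y : Fin (m+1) → ℝ | y 0 = ((MeasurableEquiv.toLp 2 (Fin (m+1) → ℝ)).symm) x₀ 0}) (fun y hy => ?_) ?_
    · rw [Set.mem_singleton_iff] at hy
      show y 0 = ((MeasurableEquiv.toLp 2 (Fin (m+1) → ℝ)).symm) x₀ 0
      simp [hy]
    · have := Measure.pi_hyperplane (μ := fun _ : Fin (m+1) => (volume : Measure ℝ)) 0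
        (((MeasurableEquiv.toLp 2 (Fin (m+1) → ℝ)).symm) x₀ 0)
      simpa [MeasureTheory.volume_pi] using this
  calc volume ({x₀} : Set (EuclideanSpace ℝ (Fin (m+1)))) = _ := by rw [← h1]
  _ = 0 := by rw [hmp.measure_preimage (measurableSet_singleton _).nullMeasurableSet, h2]

end main




/-- first identity of Lemma 1 on all of `ℝⁿ`: for a `C¹` solution of the
continuity equation and a radial `C¹` weight `φ(x) = ψ(|x|)`, under integrability, domination
and decay assumptions, the generalized momentum of mass `G_φ(t) = ∫ ρ(t,x) φ(x) dx` is
differentiable with `G_φ'(t) = ∫ (ψ'(|x|)/|x|) (v·x) ρ dx`. -/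
theorem generalized_momentum_first_derivative
    (n : ℕ) (hn : 1 ≤ n)
    (ρ : ℝ × EuclideanSpace ℝ (Fin n) → ℝ)
    (v : ℝ × EuclideanSpace ℝ (Fin n) → EuclideanSpace ℝ (Fin n))
    (hρ : ContDiff ℝ 1 ρ) (hv : ContDiff ℝ 1 v)
    (hρnonneg : ∀ q, 0 ≤ ρ q)
    -- continuity equation
    (hcont : ∀ q, pdT ρ q + divX (fun z => ρ z • v z) q = 0)
    -- radial C¹ weight
    (φ : EuclideanSpace ℝ (Fin n) → ℝ) (ψ : ℝ → ℝ)
    (hφ : ContDiff ℝ 1 φ) (hφψ : ∀ x, φ x = ψ ‖x‖)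
    -- integrability of the integrands
    (hint1 : ∀ t : ℝ, Integrable (fun x => ρ (t, x) * φ x))
    (hint2 : ∀ t : ℝ, Integrable (fun x =>
      ρ (t, x) * (deriv ψ ‖x‖ / ‖x‖) * ⟪v (t, x), x⟫))
    -- domination of the time derivative on compact time intervals
    (hdom : ∀ a b : ℝ, a ≤ b → ∃ g : EuclideanSpace ℝ (Fin n) → ℝ, Integrable g ∧
      ∀ t ∈ Set.Icc a b, ∀ x, |pdT (fun z => ρ z * φ z.2) (t, x)| ≤ g x)
    -- decay at infinity
    (hdecay : ∃ R₀ > (0:ℝ), ∃ ε > (0:ℝ), ∃ C : ℝ → ℝ, Continuous C ∧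
      ∀ t : ℝ, ∀ x : EuclideanSpace ℝ (Fin n), R₀ < ‖x‖ →
        ρ (t, x) * ‖v (t, x)‖ * ‖fderiv ℝ φ x‖ ≤ C t * ‖x‖ ^ (-(n:ℝ) + 1 - ε) ∧
        ρ (t, x) * ‖v (t, x)‖ * |φ x| ≤ C t * ‖x‖ ^ (-(n:ℝ) + 1 - ε)) :
    ∀ t : ℝ, HasDerivAt (fun s => ∫ x, ρ (s, x) * φ x)
      (∫ x, (deriv ψ ‖x‖ / ‖x‖) * ⟪v (t, x), x⟫ * ρ (t, x)) t := by

  obtain ⟨m, rfl⟩ : ∃ m, n = m + 1 := ⟨n - 1, (Nat.succ_pred_eq_of_pos hn).symm⟩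
  intro t
  obtain ⟨R₀, hR₀, ε, hε, C, hC, hdec⟩ := hdecay
  have hρφ : ContDiff ℝ 1 (fun z : ℝ × EuclideanSpace ℝ (Fin (m+1)) => ρ z * φ z.2) :=
    hρ.mul (hφ.comp contDiff_snd)
  set F' : ℝ → EuclideanSpace ℝ (Fin (m+1)) → ℝ :=
    fun s x => pdT (fun z => ρ z * φ z.2) (s, x) with hF'def
  -- Step A : differentiation under the integral sign
  obtain ⟨g, hg, hgbd⟩ := hdom (t-1) (t+1) (by linarith)
  have hdiffρ : ∀ (s : ℝ) (x : EuclideanSpace ℝ (Fin (m+1))),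
      DifferentiableAt ℝ (fun s' : ℝ => ρ (s', x)) s := fun s x =>
    ((hρ.differentiable one_ne_zero) (s, x)).comp s (differentiableAt_id.prodMk (differentiableAt_const x))
  have hdiffF : ∀ (s : ℝ) (x : EuclideanSpace ℝ (Fin (m+1))),
      DifferentiableAt ℝ (fun s' : ℝ => ρ (s', x) * φ x) s := fun s x =>
    (hdiffρ s x).mul_const (φ x)
  have hderivF : ∀ (s : ℝ) (x : EuclideanSpace ℝ (Fin (m+1))),
      HasDerivAt (fun s' : ℝ => ρ (s', x) * φ x) (F' s x) s := by
    intro s x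
    have h1 := (hdiffF s x).hasDerivAt
    exact h1
  have hstep := hasDerivAt_integral_of_dominated_loc_of_deriv_le (μ := volume)
    (F := fun s x => ρ (s, x) * φ x) (F' := F') (x₀ := t) (bound := g) (s := Metric.ball t 1) (Metric.ball_mem_nhds t one_pos)
    (Eventually.of_forall fun s =>
      ((hρ.continuous.comp (continuous_const.prodMk continuous_id)).mul
        hφ.continuous).aestronglyMeasurable)
    (hint1 t)
    (((pdT_continuous _ hρφ).comp (continuous_const.prodMk continuous_id)).aestronglyMeasurable)
    (Eventually.of_forall fun x => by
      intro s hs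
      rw [Real.ball_eq_Ioo] at hs
      rw [Real.norm_eq_abs]
      exact hgbd s ⟨hs.1.le, hs.2.le⟩ x)
    hg
    (Eventually.of_forall fun x => fun s _ => hderivF s x)
  -- Step B : identify the derivative integrand
  set u : EuclideanSpace ℝ (Fin (m+1)) → EuclideanSpace ℝ (Fin (m+1)) :=
    fun x => ρ (t, x) • v (t, x) with hudef
  have hslice : ContDiff ℝ 1 (fun x : EuclideanSpace ℝ (Fin (m+1)) => ((t:ℝ), x)) :=
    contDiff_const.prodMk contDiff_id
  have hu : ContDiff ℝ 1 u := (hρ.comp hslice).smul (hv.comp hslice)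
  set w : EuclideanSpace ℝ (Fin (m+1)) → EuclideanSpace ℝ (Fin (m+1)) :=
    fun x => φ x • u x with hwdef
  have hw : ContDiff ℝ 1 w := hφ.smul hu
  set Dv : EuclideanSpace ℝ (Fin (m+1)) → ℝ :=
    fun x => ∑ i, fderiv ℝ w x (EuclideanSpace.single i 1) i with hDvdef
  set h : EuclideanSpace ℝ (Fin (m+1)) → ℝ :=
    fun x => (deriv ψ ‖x‖ / ‖x‖) * ⟪v (t, x), x⟫ * ρ (t, x) with hhdef
  -- divergence of u in terms of divX
  have hdivX : ∀ x, divX (fun z => ρ z • v z) (t, x)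
      = ∑ i, fderiv ℝ u x (EuclideanSpace.single i 1) i := by
    intro x
    refine Finset.sum_congr rfl (fun i _ => ?_)
    have h1 : HasFDerivAt (⇑(EuclideanSpace.proj (𝕜 := ℝ) i) ∘ u)
        ((EuclideanSpace.proj i).comp (fderiv ℝ u x)) x :=
      (EuclideanSpace.proj i).hasFDerivAt.comp x ((hu.differentiable one_ne_zero x).hasFDerivAt)
    show fderiv ℝ (fun y => (ρ ((t,x).1, y) • v ((t,x).1, y)) i) x (EuclideanSpace.single i 1)
      = fderiv ℝ u x (EuclideanSpace.single i 1) i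
    have h2 : (fun y => (ρ ((t,x).1, y) • v ((t,x).1, y)) i)
        = ⇑(EuclideanSpace.proj (𝕜 := ℝ) i) ∘ u := rfl
    rw [h2, h1.fderiv]
    rfl
  -- pointwise divergence expansion
  have hDv : ∀ x, Dv x = φ x * divX (fun z => ρ z • v z) (t, x) + fderiv ℝ φ x (u x) := by
    intro x
    rw [hdivX x]
    exact div_smul_eq φ u hφ hu x
  -- F' t in terms of pdT ρ
  have hF't : ∀ x, F' t x = pdT ρ (t, x) * φ x := by
    intro x
    show deriv (fun s' : ℝ => ρ (s', x) * φ x) t = deriv (fun s' : ℝ => ρ (s', x)) t * φ x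
    rw [deriv_mul_const (hdiffρ t x)]
  -- combine with continuity equation, away from the origin
  have hkey : ∀ x : EuclideanSpace ℝ (Fin (m+1)), x ≠ 0 → F' t x = -Dv x + h x := by
    intro x hx
    have hce := hcont (t, x)
    have hrad := radial_fderiv hn φ ψ hφ hφψ x hx (u x)
    have hin : ⟪u x, x⟫ = ρ (t, x) * ⟪v (t, x), x⟫ := real_inner_smul_left _ _ _
    rw [hF't x, hDv x]
    rw [hhdef]
    simp only []
    rw [hrad, hin]
    have : pdT ρ (t, x) = - divX (fun z => ρ z • v z) (t, x) := by linarith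
    rw [this]
    ring
  -- a.e. version
  have hae : ∀ᵐ x : EuclideanSpace ℝ (Fin (m+1)), F' t x = -Dv x + h x := by
    have h0 : ∀ᵐ x : EuclideanSpace ℝ (Fin (m+1)), x ≠ 0 := by
      rw [ae_iff]
      have : {x : EuclideanSpace ℝ (Fin (m+1)) | ¬ x ≠ 0} = {0} := by
        ext x; simp
      rw [this]
      exact vol_singleton_zero 0
    filter_upwards [h0] with x hx using hkey x hx
  -- integrability of the pieces
  have hIntH : Integrable h := by
    refine (hint2 t).congr (Eventually.of_forall fun x => ?_)
    rw [hhdef]; ring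
  have hIntF' : Integrable (F' t) := hstep.1
  have hIntDv : Integrable Dv := by
    have h1 : Integrable (fun x => h x - F' t x) := hIntH.sub hIntF'
    refine h1.congr ?_
    filter_upwards [hae] with x hx
    rw [hx]; ring
  -- the divergence integrates to zero
  have hDvzero : ∫ x, Dv x = 0 := by
    refine div_integral_zero w (fun x => fderiv ℝ w x) (hw.continuous)
      (fun x => (hw.differentiable one_ne_zero x).hasFDerivAt) hIntDv hR₀ hε (abs_nonneg (C t)) ?_
    intro x hx
    have hb := (hdec t x hx).2
    have h1 : ‖w x‖ = ρ (t, x) * ‖v (t, x)‖ * |φ x| := by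
      show ‖φ x • (ρ (t, x) • v (t, x))‖ = _
      rw [norm_smul, norm_smul, Real.norm_eq_abs, Real.norm_eq_abs,
        abs_of_nonneg (hρnonneg (t, x))]
      ring
    rw [h1]
    refine hb.trans ?_
    have hcast : ((m+1 : ℕ) : ℝ) = (m : ℝ) + 1 := by push_cast; ring
    rw [hcast]
    exact mul_le_mul_of_nonneg_right (le_abs_self _) (Real.rpow_nonneg (norm_nonneg x) _)
  -- conclude
  have hval : ∫ x, F' t x = ∫ x, h x := by
    have h2 : ∫ x, F' t x = ∫ x, (h x - Dv x) := by
      refine integral_congr_ae ?_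
      filter_upwards [hae] with x hx
      rw [hx]; ring
    rw [h2, integral_sub hIntH hIntDv, hDvzero, sub_zero]
  have := hstep.2
  rw [hval] at this
  exact this
end

section
/- Let n ≥ 1, γ > 1, and let (ρ, v, p) be a global C² classical solution on [0,∞) × ℝⁿ of the compressible Navier–Stokes system with zero heat conduction (as in the class K_{NS₀} setting), with ρ ≥ 0, p ≥ 0, total mass m := ∫ρ dx constant and finite, conserved total energy 𝓔 := ½∫ρ|v|² dx + (1/(γ−1))∫p dx > 0, and with G(t) := ½∫ρ|x|² dx finite and satisfying G''(t) = 2E_k(t) + n(γ−1)E_i(t). Define R(t) := (R₀^{n+1} + (n+1)∫₀ᵗ M_v(τ)dτ)^{1/(n+1)}, and assume the decay bounds ρ(t,x) ≤ M_ρ(t)|x|^{−n−2−ε} and |v(t,x)| ≤ M_v(t)|x|^{−n} hold for all t and all |x| > R(t), with continuous positive M_v, M_ρ and constants R₀ > 0, ε > 0. Then limsup_{t→∞} ( R(t)² + M_ρ(t) R(t)^{−ε} ) / t² > 0. In particular, it is impossible that simultaneously ∫₀ᵗ M_v(τ)dτ = o(t^{n+1}) and M_ρ(t)·(1 + ∫₀ᵗ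 M_v(τ)dτ)^{−ε/(n+1)} = o(t²) as t → ∞. -/
open MeasureTheory Real Filter Asymptotics
open scoped RealInnerProductSpace

open MeasureTheory Real Filter Asymptotics Set Metric

lemma aux_rpow_add_le {a b p : ℝ} (ha : 0 ≤ a) (hb : 0 ≤ b) (hp : 0 ≤ p) (hp1 : p ≤ 1) :
    (a + b) ^ p ≤ a ^ p + b ^ p := by
  have h := NNReal.rpow_add_le_add_rpow (Real.toNNReal a) (Real.toNNReal b) hp hp1
  rw [← NNReal.coe_le_coe] at h
  push_cast at h
  rwa [Real.coe_toNNReal _ ha, Real.coe_toNNReal _ hb] at h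

lemma aux_integral_norm_rpow (n : ℕ) (hn : 1 ≤ n) {ε R : ℝ} (hε : 0 < ε) (hR : 0 < R) :
    IntegrableOn (fun x : EuclideanSpace ℝ (Fin n) => ‖x‖ ^ (-(n:ℝ) - ε))
      {x : EuclideanSpace ℝ (Fin n) | R < ‖x‖} volume ∧
    ∫ x in {x : EuclideanSpace ℝ (Fin n) | R < ‖x‖}, ‖x‖ ^ (-(n:ℝ) - ε)
      = (n : ℝ) * (volume (ball (0 : EuclideanSpace ℝ (Fin n)) 1)).toReal * (R ^ (-ε) / ε) := by
  set E := EuclideanSpace ℝ (Fin n)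
  haveI : Nontrivial E := by
    have : 0 < Module.finrank ℝ E := by
      rw [finrank_euclideanSpace_fin]; omega
    exact Module.nontrivial_of_finrank_pos this
  have hdim : Module.finrank ℝ E = n := finrank_euclideanSpace_fin
  have hSm : MeasurableSet {x : E | R < ‖x‖} :=
    measurableSet_lt measurable_const measurable_norm
  have hint : IntegrableOn (fun x : E => ‖x‖ ^ (-(n:ℝ) - ε)) {x : E | R < ‖x‖} volume := by
    have hr : (Module.finrank ℝ E : ℝ) < (n : ℝ) + ε := by rw [hdim]; linarith
    have h1 : Integrable (fun x : E => (1 + ‖x‖) ^ (-((n:ℝ) + ε))) volume :=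
      integrable_one_add_norm hr
    refine Integrable.mono' ((h1.const_mul ((1 + 1/R) ^ ((n:ℝ) + ε))).integrableOn)
      ?_ ?_
    · exact (Measurable.aestronglyMeasurable (by fun_prop))
    · filter_upwards [ae_restrict_mem hSm] with x hx
      have hx0 : 0 < ‖x‖ := lt_trans hR hx
      rw [Real.norm_eq_abs, abs_of_nonneg (rpow_nonneg (norm_nonneg x) _)]
      have key : (1 : ℝ) + ‖x‖ ≤ (1 + 1/R) * ‖x‖ := by
        have h' : 1 ≤ ‖x‖ / R := (one_le_div hR).mpr hx.le
        have heq : (1 + 1/R) * ‖x‖ = ‖x‖ + ‖x‖ / R := by ring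
        rw [heq]; linarith
      have h2 : ((1 + 1/R) * ‖x‖) ^ (-((n:ℝ) + ε)) ≤ (1 + ‖x‖) ^ (-((n:ℝ) + ε)) :=
        Real.rpow_le_rpow_of_nonpos (by positivity) key (neg_nonpos.mpr (by positivity))
      rw [show -(n:ℝ) - ε = -((n:ℝ) + ε) by ring]
      calc ‖x‖ ^ (-((n:ℝ) + ε))
          = (1 + 1/R) ^ ((n:ℝ) + ε) * ((1 + 1/R) * ‖x‖) ^ (-((n:ℝ) + ε)) := by
            rw [Real.mul_rpow (by positivity) (norm_nonneg x), ← mul_assoc,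
              ← Real.rpow_add (by positivity), add_neg_cancel, Real.rpow_zero, one_mul]
        _ ≤ (1 + 1/R) ^ ((n:ℝ) + ε) * (1 + ‖x‖) ^ (-((n:ℝ) + ε)) := by
            exact mul_le_mul_of_nonneg_left h2 (by positivity)
  refine ⟨hint, ?_⟩
  have key := integral_fun_norm_addHaar (volume : Measure E)
    ((Ioi R).indicator (fun y => y ^ (-(n:ℝ) - ε)))
  have h0 : (fun x : E => (Ioi R).indicator (fun y => y ^ (-(n:ℝ) - ε)) ‖x‖)
      = {x : E | R < ‖x‖}.indicator (fun x => ‖x‖ ^ (-(n:ℝ) - ε)) := by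
    funext x
    by_cases hx : R < ‖x‖ <;> simp [Set.indicator, hx]
  rw [h0, integral_indicator hSm] at key
  rw [key, hdim]
  have h1 : ∫ y in Ioi (0:ℝ), y ^ (n - 1) • (Ioi R).indicator (fun y => y ^ (-(n:ℝ) - ε)) y
      = ∫ y in Ioi (0:ℝ), (Ioi R).indicator (fun y => y ^ (-1 - ε)) y := by
    apply setIntegral_congr_fun measurableSet_Ioi
    intro y hy
    simp only [smul_eq_mul]
    by_cases hyR : y ∈ Ioi R
    · rw [Set.indicator_of_mem hyR, Set.indicator_of_mem hyR]
      have hy0 : (0:ℝ) < y := hy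
      rw [← Real.rpow_natCast y (n-1), ← Real.rpow_add hy0]
      congr 1
      rw [Nat.cast_sub hn]
      push_cast; ring
    · rw [Set.indicator_of_notMem hyR, Set.indicator_of_notMem hyR, mul_zero]
  rw [h1, integral_indicator measurableSet_Ioi, Measure.restrict_restrict measurableSet_Ioi,
    Set.inter_eq_left.mpr (Ioi_subset_Ioi hR.le)]
  rw [integral_Ioi_rpow_of_lt (by linarith) hR]
  rw [show (-1 - ε) + 1 = -ε by ring]
  rw [nsmul_eq_mul, smul_eq_mul]
  rw [neg_div, div_neg, neg_neg]
  rw [measureReal_def]; ring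


set_option maxHeartbeats 2000000 in
/-- Theorem 1: a global classical solution of the compressible
Navier–Stokes system with zero heat conduction, lying in the decay class `K_{NS₀}`, forces
the bounding functions to grow: `limsup_{t→∞} (R(t)² + M_ρ(t)R(t)^{−ε})/t² > 0`, where
`R(t) = (R₀^{n+1} + (n+1)∫₀ᵗM_v)^{1/(n+1)}`; in particular one cannot have simultaneously
`∫₀ᵗ M_v = o(t^{n+1})` and `M_ρ(t)(1+∫₀ᵗM_v)^{−ε/(n+1)} = o(t²)`. -/
theorem navier_stokes_growth_of_bounding_functions
    (n : ℕ) (hn : 1 ≤ n) (γ μ lam : ℝ) (hγ : 1 < γ)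
    (hμ : 0 ≤ μ) (hlam : 0 ≤ lam + (2 / n) * μ)
    (ρ p : ℝ × EuclideanSpace ℝ (Fin n) → ℝ)
    (v : ℝ × EuclideanSpace ℝ (Fin n) → EuclideanSpace ℝ (Fin n))
    (T : ℝ × EuclideanSpace ℝ (Fin n) → Fin n → Fin n → ℝ)
    (hρ : ContDiff ℝ 2 ρ) (hv : ContDiff ℝ 2 v) (hp : ContDiff ℝ 2 p)
    (hρnonneg : ∀ q, 0 ≤ q.1 → 0 ≤ ρ q) (hpnonneg : ∀ q, 0 ≤ q.1 → 0 ≤ p q)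
    -- the Newton-law stress tensor
    (hT : ∀ q i j, T q i j =
      μ * (pdX (fun z => v z j) i q + pdX (fun z => v z i) j q)
        + lam * divX v q * (if i = j then 1 else 0))
    -- the compressible Navier–Stokes system with zero heat conduction on [0,∞) × ℝⁿ
    (hcont : ∀ q : ℝ × EuclideanSpace ℝ (Fin n), 0 ≤ q.1 →
      pdT ρ q + divX (fun z => ρ z • v z) q = 0)
    (hmom : ∀ q : ℝ × EuclideanSpace ℝ (Fin n), 0 ≤ q.1 → ∀ i,
      pdT (fun z => ρ z * v z i) q
        + (∑ j, pdX (fun z => ρ z * v z i * v z j) j q) + pdX p i q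
      = ∑ j, pdX (fun z => T z i j) j q)
    (hpress : ∀ q : ℝ × EuclideanSpace ℝ (Fin n), 0 ≤ q.1 →
      pdT p q + (∑ i, v q i * pdX p i q) + γ * p q * divX v q
        = (γ - 1) * ∑ i, ∑ j, T q i j * pdX (fun z => v z i) j q)
    -- total mass, constant and finite
    (m : ℝ)
    (hmass : ∀ t : ℝ, 0 ≤ t → Integrable (fun x => ρ (t, x)) ∧ (∫ x, ρ (t, x)) = m)
    -- conserved, positive total energy
    (𝓔 : ℝ) (h𝓔 : 0 < 𝓔)
    (hEkint : ∀ t : ℝ, 0 ≤ t → Integrable (fun x => ρ (t, x) * ‖v (t, x)‖ ^ 2))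
    (hEiint : ∀ t : ℝ, 0 ≤ t → Integrable (fun x => p (t, x)))
    (henergy : ∀ t : ℝ, 0 ≤ t →
      (1/2) * (∫ x, ρ (t, x) * ‖v (t, x)‖ ^ 2) + (1 / (γ - 1)) * (∫ x, p (t, x)) = 𝓔)
    -- finite momentum of mass satisfying G'' = 2E_k + n(γ−1)E_i
    (hGint : ∀ t : ℝ, 0 ≤ t → Integrable (fun x => ρ (t, x) * ‖x‖ ^ 2))
    (hGdiff : ∀ t : ℝ, 0 ≤ t →
      DifferentiableAt ℝ (fun s => (1/2) * ∫ x, ρ (s, x) * ‖x‖ ^ 2) t)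
    (hG'' : ∀ t : ℝ, 0 ≤ t →
      HasDerivAt (deriv (fun s => (1/2) * ∫ x, ρ (s, x) * ‖x‖ ^ 2))
        (2 * ((1/2) * ∫ x, ρ (t, x) * ‖v (t, x)‖ ^ 2)
          + n * (γ - 1) * ((1 / (γ - 1)) * ∫ x, p (t, x))) t)
    -- the decay class, outside the ball of radius R(t)
    (Mv Mρ : ℝ → ℝ) (hMv : Continuous Mv) (hMρ : Continuous Mρ)
    (hMvpos : ∀ t, 0 < Mv t) (hMρpos : ∀ t, 0 < Mρ t)
    (R₀ ε : ℝ) (hR₀ : 0 < R₀) (hε : 0 < ε)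
    (Rt : ℝ → ℝ)
    (hRt : ∀ t : ℝ, Rt t =
      (R₀ ^ ((n:ℝ) + 1) + ((n:ℝ) + 1) * ∫ τ in (0:ℝ)..t, Mv τ) ^ (1 / ((n:ℝ) + 1)))
    (hdecay : ∀ t : ℝ, 0 ≤ t → ∀ x : EuclideanSpace ℝ (Fin n), Rt t < ‖x‖ →
      ρ (t, x) ≤ Mρ t * ‖x‖ ^ (-(n:ℝ) - 2 - ε) ∧
      ‖v (t, x)‖ ≤ Mv t * ‖x‖ ^ (-(n:ℝ))) :
    (∃ c > (0:ℝ), ∃ᶠ t in atTop, c ≤ (Rt t ^ 2 + Mρ t * Rt t ^ (-ε)) / t ^ 2) ∧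
    ¬ (((fun t => ∫ τ in (0:ℝ)..t, Mv τ) =o[atTop] fun t : ℝ => t ^ (n + 1)) ∧
       ((fun t => Mρ t * (1 + ∫ τ in (0:ℝ)..t, Mv τ) ^ (-(ε / ((n:ℝ) + 1))))
          =o[atTop] fun t : ℝ => t ^ 2)) := by

  classical
  have hγ' : (0:ℝ) < γ - 1 := by linarith
  have hn1 : (1:ℝ) ≤ (n:ℝ) := by exact_mod_cast hn
  set G : ℝ → ℝ := fun s => (1/2) * ∫ x, ρ (s, x) * ‖x‖ ^ 2 with hGdef
  set c₀ : ℝ := min 2 ((n:ℝ) * (γ - 1)) * 𝓔 with hc₀def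
  have hc₀ : 0 < c₀ := by
    apply mul_pos _ h𝓔
    exact lt_min two_pos (by nlinarith)
  -- Step A: G'' ≥ c₀
  have hval : ∀ t : ℝ, 0 ≤ t →
      c₀ ≤ 2 * ((1/2) * ∫ x, ρ (t, x) * ‖v (t, x)‖ ^ 2)
        + n * (γ - 1) * ((1 / (γ - 1)) * ∫ x, p (t, x)) := by
    intro t ht
    set Ek := (1/2) * ∫ x, ρ (t, x) * ‖v (t, x)‖ ^ 2 with hEk
    set Ei := (1 / (γ - 1)) * ∫ x, p (t, x) with hEi
    have hEk0 : 0 ≤ Ek := by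
      apply mul_nonneg (by norm_num)
      exact integral_nonneg fun x => mul_nonneg (hρnonneg (t, x) ht) (sq_nonneg _)
    have hEi0 : 0 ≤ Ei := by
      apply mul_nonneg (by positivity)
      exact integral_nonneg fun x => hpnonneg (t, x) ht
    have hsum : Ek + Ei = 𝓔 := henergy t ht
    have h2 : min 2 ((n:ℝ) * (γ - 1)) ≤ 2 := min_le_left _ _
    have h3 : min 2 ((n:ℝ) * (γ - 1)) ≤ (n:ℝ) * (γ - 1) := min_le_right _ _
    have h4 : c₀ = min 2 ((n:ℝ) * (γ - 1)) * Ek + min 2 ((n:ℝ) * (γ - 1)) * Ei := by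
      rw [hc₀def, ← hsum]; ring
    nlinarith [mul_le_mul_of_nonneg_right h2 hEk0, mul_le_mul_of_nonneg_right h3 hEi0]
  have hDG : ∀ s : ℝ, 0 ≤ s → HasDerivAt (fun u => deriv G u - c₀ * u)
      ((2 * ((1/2) * ∫ x, ρ (s, x) * ‖v (s, x)‖ ^ 2)
        + n * (γ - 1) * ((1 / (γ - 1)) * ∫ x, p (s, x))) - c₀ * 1) s := by
    intro s hs
    exact (hG'' s hs).sub ((hasDerivAt_id s).const_mul c₀)
  have key1 : ∀ t : ℝ, 0 ≤ t → deriv G 0 + c₀ * t ≤ deriv G t := by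
    have hmono : MonotoneOn (fun u => deriv G u - c₀ * u) (Set.Ici 0) := by
      apply monotoneOn_of_deriv_nonneg (convex_Ici 0)
      · intro s hs
        exact (hDG s hs).continuousAt.continuousWithinAt
      · intro s hs
        rw [interior_Ici] at hs
        exact (hDG s hs.le).differentiableAt.differentiableWithinAt
      · intro s hs
        rw [interior_Ici] at hs
        rw [(hDG s hs.le).deriv]
        linarith [hval s hs.le]
    intro t ht
    have h6 := hmono Set.self_mem_Ici (show t ∈ Set.Ici (0:ℝ) from ht) ht
    simp only at h6
    linarith
  have hψ : ∀ s : ℝ, 0 ≤ s → HasDerivAt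
      (fun u => G u - (deriv G 0 * u + (c₀/2) * u^2))
      (deriv G s - (deriv G 0 * 1 + (c₀/2) * ((2:ℕ) * s^(2-1)))) s := by
    intro s hs
    exact ((hGdiff s hs).hasDerivAt).sub
      (((hasDerivAt_id s).const_mul (deriv G 0)).add ((hasDerivAt_pow 2 s).const_mul (c₀/2)))
  have key2 : ∀ t : ℝ, 0 ≤ t → G 0 + deriv G 0 * t + (c₀/2) * t^2 ≤ G t := by
    have hmono : MonotoneOn (fun u => G u - (deriv G 0 * u + (c₀/2) * u^2)) (Set.Ici 0) := by
      apply monotoneOn_of_deriv_nonneg (convex_Ici 0)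
      · intro s hs; exact (hψ s hs).continuousAt.continuousWithinAt
      · intro s hs; rw [interior_Ici] at hs
        exact (hψ s hs.le).differentiableAt.differentiableWithinAt
      · intro s hs; rw [interior_Ici] at hs
        rw [(hψ s hs.le).deriv]
        have h5 := key1 s hs.le
        have hpow : ((2:ℕ):ℝ) * s^(2-1) = 2 * s := by norm_num
        rw [hpow]
        nlinarith [key1 s hs.le]
    intro t ht
    have h6 := hmono Set.self_mem_Ici (show t ∈ Set.Ici (0:ℝ) from ht) ht
    have h7 : (fun u => G u - (deriv G 0 * u + (c₀/2) * u^2)) 0 = G 0 := by norm_num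
    rw [h7] at h6
    simp only at h6
    linarith
  -- basic facts on Rt
  have hIv : ∀ t : ℝ, 0 ≤ t → 0 ≤ ∫ τ in (0:ℝ)..t, Mv τ := by
    intro t ht
    exact intervalIntegral.integral_nonneg ht fun u _ => (hMvpos u).le
  have hp0 : (0:ℝ) < (n:ℝ) + 1 := by linarith
  have hRge : ∀ t : ℝ, 0 ≤ t → R₀ ≤ Rt t := by
    intro t ht
    rw [hRt t]
    have h7 : R₀ ^ ((n:ℝ)+1) ≤ R₀ ^ ((n:ℝ)+1) + ((n:ℝ)+1) * ∫ τ in (0:ℝ)..t, Mv τ := by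
      nlinarith [hIv t ht]
    calc R₀ = (R₀ ^ ((n:ℝ)+1)) ^ (1/((n:ℝ)+1)) := by
          rw [← Real.rpow_mul hR₀.le, mul_one_div_cancel hp0.ne', Real.rpow_one]
      _ ≤ (R₀ ^ ((n:ℝ)+1) + ((n:ℝ)+1) * ∫ τ in (0:ℝ)..t, Mv τ) ^ (1/((n:ℝ)+1)) :=
          Real.rpow_le_rpow (by positivity) h7 (by positivity)
  have hRpos : ∀ t : ℝ, 0 ≤ t → 0 < Rt t := fun t ht => lt_of_lt_of_le hR₀ (hRge t ht)
  have hm0 : 0 ≤ m := by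
    rw [← (hmass 0 le_rfl).2]
    exact integral_nonneg fun x => hρnonneg (0, x) le_rfl
  obtain ⟨C₀, hC₀def⟩ : ∃ C₀ : ℝ,
      C₀ = (n:ℝ) * (volume (Metric.ball (0:EuclideanSpace ℝ (Fin n)) 1)).toReal := ⟨_, rfl⟩
  have hC₀0 : 0 ≤ C₀ := by rw [hC₀def]; positivity
  obtain ⟨K, hKdef⟩ : ∃ K : ℝ, K = max (m/2) (C₀/ε) + 1 := ⟨_, rfl⟩
  have hK0 : 0 < K := by
    rw [hKdef]
    have : (0:ℝ) ≤ max (m/2) (C₀/ε) := le_trans (by positivity) (le_max_right _ _)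
    linarith
  -- Step B: upper bound on G
  have key3 : ∀ t : ℝ, 0 ≤ t → G t ≤ K * (Rt t ^ 2 + Mρ t * Rt t ^ (-ε)) := by
    intro t ht
    have hRp := hRpos t ht
    set S : Set (EuclideanSpace ℝ (Fin n)) := {x | Rt t < ‖x‖} with hSdef
    have hSm : MeasurableSet S := measurableSet_lt measurable_const measurable_norm
    obtain ⟨hIb, hVb⟩ := aux_integral_norm_rpow n hn hε hRp
    have hgint := hGint t ht
    have hsplit := integral_add_compl hSm hgint
    have hB1 : ∫ x in Sᶜ, ρ (t, x) * ‖x‖ ^ 2 ≤ m * Rt t ^ 2 := by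
      have hstep : (∫ x in Sᶜ, ρ (t, x) * ‖x‖ ^ 2) ≤ ∫ x in Sᶜ, ρ (t, x) * Rt t ^ 2 := by
        apply setIntegral_mono_on hgint.integrableOn
          (((hmass t ht).1.mul_const _).integrableOn) hSm.compl
        intro x hx
        have hx' : ‖x‖ ≤ Rt t := le_of_not_gt hx
        exact mul_le_mul_of_nonneg_left (pow_le_pow_left₀ (norm_nonneg x) hx' 2)
          (hρnonneg (t, x) ht)
      have hstep2 : ∫ x in Sᶜ, ρ (t, x) * Rt t ^ 2 = (∫ x in Sᶜ, ρ (t, x)) * Rt t ^ 2 :=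
        integral_mul_const _ _
      have hstep3 : (∫ x in Sᶜ, ρ (t, x)) ≤ m := by
        rw [← (hmass t ht).2]
        exact setIntegral_le_integral (hmass t ht).1
          (Filter.Eventually.of_forall fun x => hρnonneg (t, x) ht)
      calc (∫ x in Sᶜ, ρ (t, x) * ‖x‖ ^ 2) ≤ (∫ x in Sᶜ, ρ (t, x)) * Rt t ^ 2 := by
            rw [← hstep2]; exact hstep
        _ ≤ m * Rt t ^ 2 := mul_le_mul_of_nonneg_right hstep3 (sq_nonneg _)
    have hB2 : ∫ x in S, ρ (t, x) * ‖x‖ ^ 2 ≤ Mρ t * (C₀ * (Rt t ^ (-ε) / ε)) := by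
      have hstep : (∫ x in S, ρ (t, x) * ‖x‖ ^ 2)
          ≤ ∫ x in S, Mρ t * ‖x‖ ^ (-(n:ℝ) - ε) := by
        apply setIntegral_mono_on hgint.integrableOn (hIb.const_mul _) hSm
        intro x hx
        have hx' : Rt t < ‖x‖ := hx
        have hx0 : 0 < ‖x‖ := lt_trans hRp hx'
        have hd := (hdecay t ht x hx').1
        have h8 : ρ (t, x) * ‖x‖ ^ 2 ≤ (Mρ t * ‖x‖ ^ (-(n:ℝ) - 2 - ε)) * ‖x‖ ^ 2 :=
          mul_le_mul_of_nonneg_right hd (by positivity)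
        have h9 : (Mρ t * ‖x‖ ^ (-(n:ℝ) - 2 - ε)) * ‖x‖ ^ 2 = Mρ t * ‖x‖ ^ (-(n:ℝ) - ε) := by
          rw [mul_assoc]
          congr 1
          rw [← Real.rpow_natCast ‖x‖ 2, ← Real.rpow_add hx0]
          congr 1
          push_cast; ring
        rw [h9] at h8; exact h8
      rw [integral_const_mul, hVb] at hstep
      rw [hC₀def]
      exact hstep
    have hGle : (∫ x, ρ (t, x) * ‖x‖ ^ 2)
        ≤ m * Rt t ^ 2 + Mρ t * (C₀ * (Rt t ^ (-ε) / ε)) := by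
      rw [← hsplit]; linarith
    have hGt : G t = (1/2) * ∫ x, ρ (t, x) * ‖x‖ ^ 2 := by simp only [hGdef]
    have hx1 : (0:ℝ) ≤ Rt t ^ 2 := sq_nonneg _
    have hx2 : (0:ℝ) ≤ Mρ t * Rt t ^ (-ε) :=
      mul_nonneg (hMρpos t).le (Real.rpow_nonneg hRp.le _)
    have hc0 : (0:ℝ) ≤ C₀/ε := by positivity
    have hK1 : m/2 ≤ K := by rw [hKdef]; linarith [le_max_left (m/2) (C₀/ε)]
    have hK2 : C₀/ε ≤ K := by rw [hKdef]; linarith [le_max_right (m/2) (C₀/ε)]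
    have h10 : Mρ t * (C₀ * (Rt t ^ (-ε) / ε)) = (C₀/ε) * (Mρ t * Rt t ^ (-ε)) := by ring
    have hA1 : (m/2) * Rt t ^ 2 ≤ K * Rt t ^ 2 := mul_le_mul_of_nonneg_right hK1 hx1
    have hA2 : (C₀/ε) * (Mρ t * Rt t ^ (-ε)) ≤ K * (Mρ t * Rt t ^ (-ε)) :=
      mul_le_mul_of_nonneg_right hK2 hx2
    have hA3 : (1/2) * ((C₀/ε) * (Mρ t * Rt t ^ (-ε))) ≤ (C₀/ε) * (Mρ t * Rt t ^ (-ε)) := by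
      nlinarith [mul_nonneg hc0 hx2]
    rw [hGt]
    rw [h10] at hGle
    nlinarith [hGle]
  -- combining: the frequently statement
  have hfreqE : ∃ c > (0:ℝ), ∀ᶠ t in atTop, c ≤ (Rt t ^ 2 + Mρ t * Rt t ^ (-ε)) / t ^ 2 := by
    refine ⟨c₀/(8*K), by positivity, ?_⟩
    filter_upwards [eventually_ge_atTop (max 1 (8*(|G 0| + |deriv G 0|)/c₀))] with t htT
    have ht1 : (1:ℝ) ≤ t := le_trans (le_max_left _ _) htT
    have ht2 : 8*(|G 0| + |deriv G 0|)/c₀ ≤ t := le_trans (le_max_right _ _) htT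
    have ht0 : (0:ℝ) ≤ t := by linarith
    have h8c : 8*(|G 0| + |deriv G 0|) ≤ c₀ * t := by
      have := mul_le_mul_of_nonneg_left ht2 hc₀.le
      rwa [mul_div_cancel₀ _ hc₀.ne'] at this
    have h8d : 8*(|G 0| + |deriv G 0|) * t ≤ c₀ * t * t :=
      mul_le_mul_of_nonneg_right h8c ht0
    have hquart : (c₀/4) * t^2 ≤ G t := by
      have hk2 := key2 t ht0
      have hb1 : -|deriv G 0| * t ≤ deriv G 0 * t :=
        mul_le_mul_of_nonneg_right (neg_abs_le _) ht0
      have hb2 : 0 ≤ (t - 1) * |G 0| := mul_nonneg (by linarith) (abs_nonneg _)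
      nlinarith [neg_abs_le (G 0), abs_nonneg (G 0), abs_nonneg (deriv G 0)]
    have hKX := key3 t ht0
    have ht2pos : (0:ℝ) < t^2 := by positivity
    rw [le_div_iff₀ ht2pos, div_mul_eq_mul_div, div_le_iff₀ (by positivity : (0:ℝ) < 8*K)]
    nlinarith [hquart, hKX, sq_nonneg t]
  obtain ⟨c, hc, hev⟩ := hfreqE
  constructor
  · exact ⟨c, hc, hev.frequently⟩
  -- Step D: impossibility of the simultaneous o-bounds
  rintro ⟨h1, h2⟩
  have hp2 : (2:ℝ) ≤ (n:ℝ) + 1 := by linarith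
  set δ₁ : ℝ := (c/4) ^ (((n:ℝ)+1)/2) / ((n:ℝ)+1) with hδ₁def
  have hδ₁ : 0 < δ₁ := by
    apply div_pos (Real.rpow_pos_of_pos (by linarith) _) hp0
  set c₂ : ℝ := min (R₀ ^ ((n:ℝ)+1)) 1 with hc₂def
  have hc₂ : 0 < c₂ := lt_min (Real.rpow_pos_of_pos hR₀ _) one_pos
  have hc₂1 : c₂ ≤ 1 := min_le_right _ _
  have hc₂R : c₂ ≤ R₀ ^ ((n:ℝ)+1) := min_le_left _ _
  have hc₂e : (0:ℝ) < c₂ ^ (-(ε/((n:ℝ)+1))) := Real.rpow_pos_of_pos hc₂ _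
  set δ₂ : ℝ := (c/4) / c₂ ^ (-(ε/((n:ℝ)+1))) with hδ₂def
  have hδ₂ : 0 < δ₂ := div_pos (by linarith) hc₂e
  have hO1 := h1.def hδ₁
  have hO2 := h2.def hδ₂
  have hcomb : ∀ᶠ t in atTop,
      (Rt t ^ 2 + Mρ t * Rt t ^ (-ε)) / t ^ 2 < c := by
    filter_upwards [hO1, hO2, eventually_ge_atTop (max 1 (4*R₀^2/c))] with t hb1 hb2 htT
    have ht1 : (1:ℝ) ≤ t := le_trans (le_max_left _ _) htT
    have htR : 4*R₀^2/c ≤ t := le_trans (le_max_right _ _) htT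
    have ht0 : (0:ℝ) ≤ t := by linarith
    have htp : (0:ℝ) < t := by linarith
    set Iv : ℝ := ∫ τ in (0:ℝ)..t, Mv τ with hIvdef
    have hIv0 : 0 ≤ Iv := hIv t ht0
    set A : ℝ := R₀ ^ ((n:ℝ)+1) + ((n:ℝ)+1) * Iv with hAdef
    have hA0 : 0 < A := by
      have := Real.rpow_pos_of_pos hR₀ ((n:ℝ)+1)
      nlinarith
    have hRA : Rt t = A ^ (1/((n:ℝ)+1)) := hRt t
    -- bound 1 : Rt t ^ 2 ≤ R₀^2 + (c/4) * t^2
    have hIvle : Iv ≤ δ₁ * t^(n+1) := by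
      have : ‖Iv‖ ≤ δ₁ * ‖t^(n+1)‖ := hb1
      rw [Real.norm_eq_abs, Real.norm_eq_abs, abs_of_nonneg (pow_nonneg ht0 _)] at this
      exact le_trans (le_abs_self _) this
    have hAle : A ≤ R₀ ^ ((n:ℝ)+1) + ((n:ℝ)+1) * δ₁ * t^(n+1) := by
      rw [hAdef]
      nlinarith [mul_le_mul_of_nonneg_left hIvle hp0.le]
    have hRt2 : Rt t ^ 2 ≤ R₀^2 + (c/4) * t^2 := by
      have e1 : Rt t ^ 2 = A ^ (2/((n:ℝ)+1)) := by
        rw [hRA, ← Real.rpow_natCast (A ^ (1/((n:ℝ)+1))) 2, ← Real.rpow_mul hA0.le]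
        congr 1
        push_cast; field_simp
      rw [e1]
      have e2 : A ^ (2/((n:ℝ)+1))
          ≤ (R₀ ^ ((n:ℝ)+1) + ((n:ℝ)+1) * δ₁ * t^(n+1)) ^ (2/((n:ℝ)+1)) :=
        Real.rpow_le_rpow hA0.le hAle (by positivity)
      have e3 : (R₀ ^ ((n:ℝ)+1) + ((n:ℝ)+1) * δ₁ * t^(n+1)) ^ (2/((n:ℝ)+1))
          ≤ (R₀ ^ ((n:ℝ)+1)) ^ (2/((n:ℝ)+1))
            + (((n:ℝ)+1) * δ₁ * t^(n+1)) ^ (2/((n:ℝ)+1)) := by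
        apply aux_rpow_add_le (by positivity) (by positivity) (by positivity)
        rw [div_le_one hp0]; exact hp2
      have e4 : (R₀ ^ ((n:ℝ)+1)) ^ (2/((n:ℝ)+1)) = R₀ ^ 2 := by
        rw [← Real.rpow_mul hR₀.le]
        rw [show ((n:ℝ)+1) * (2/((n:ℝ)+1)) = ((2:ℕ):ℝ) by push_cast; field_simp]
        exact Real.rpow_natCast R₀ 2
      have e5 : (((n:ℝ)+1) * δ₁ * t^(n+1)) ^ (2/((n:ℝ)+1)) = (c/4) * t^2 := by
        rw [Real.mul_rpow (by positivity) (by positivity)]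
        have e6 : ((n:ℝ)+1) * δ₁ = (c/4) ^ (((n:ℝ)+1)/2) := by
          rw [hδ₁def, mul_comm, div_mul_cancel₀ _ hp0.ne']
        have e7 : (((n:ℝ)+1) * δ₁) ^ (2/((n:ℝ)+1)) = c/4 := by
          rw [e6, ← Real.rpow_mul (by linarith : (0:ℝ) ≤ c/4)]
          rw [show (((n:ℝ)+1)/2) * (2/((n:ℝ)+1)) = 1 by field_simp]
          exact Real.rpow_one _
        have e8 : ((t:ℝ)^(n+1)) ^ (2/((n:ℝ)+1)) = t^2 := by
          rw [← Real.rpow_natCast t (n+1), ← Real.rpow_mul ht0]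
          rw [show (((n+1:ℕ):ℝ)) * (2/((n:ℝ)+1)) = ((2:ℕ):ℝ) by push_cast; field_simp]
          exact Real.rpow_natCast t 2
        rw [e7, e8]
      calc A ^ (2/((n:ℝ)+1)) ≤ _ := e2
        _ ≤ _ := e3
        _ = R₀ ^ 2 + (c/4) * t^2 := by rw [e4, e5]
    -- bound 2 : Mρ t * Rt t ^ (-ε) ≤ (c/4) * t^2
    have hMle : Mρ t * Rt t ^ (-ε) ≤ (c/4) * t^2 := by
      have f1 : Rt t ^ (-ε) = A ^ (-(ε/((n:ℝ)+1))) := by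
        rw [hRA, ← Real.rpow_mul hA0.le]
        congr 1; field_simp
      have f2 : c₂ * (1 + Iv) ≤ A := by
        rw [hAdef]
        nlinarith [mul_le_mul_of_nonneg_right hc₂1 hIv0]
      have f3 : A ^ (-(ε/((n:ℝ)+1))) ≤ (c₂ * (1 + Iv)) ^ (-(ε/((n:ℝ)+1))) :=
        Real.rpow_le_rpow_of_nonpos (by nlinarith) f2 (neg_nonpos.mpr (by positivity))
      have f4 : (c₂ * (1 + Iv)) ^ (-(ε/((n:ℝ)+1)))
          = c₂ ^ (-(ε/((n:ℝ)+1))) * (1 + Iv) ^ (-(ε/((n:ℝ)+1))) :=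
        Real.mul_rpow hc₂.le (by linarith)
      have f5 : Mρ t * (1 + Iv) ^ (-(ε/((n:ℝ)+1))) ≤ δ₂ * t^2 := by
        have := hb2
        rw [Real.norm_eq_abs, Real.norm_eq_abs, abs_of_nonneg (pow_nonneg ht0 _)] at this
        exact le_trans (le_abs_self _) this
      have f6 : 0 < (1 + Iv) ^ (-(ε/((n:ℝ)+1))) := Real.rpow_pos_of_pos (by linarith) _
      calc Mρ t * Rt t ^ (-ε)
          = Mρ t * A ^ (-(ε/((n:ℝ)+1))) := by rw [f1]
        _ ≤ Mρ t * (c₂ ^ (-(ε/((n:ℝ)+1))) * (1 + Iv) ^ (-(ε/((n:ℝ)+1)))) := by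
            rw [← f4]
            exact mul_le_mul_of_nonneg_left (f4 ▸ f3) (hMρpos t).le
        _ = c₂ ^ (-(ε/((n:ℝ)+1))) * (Mρ t * (1 + Iv) ^ (-(ε/((n:ℝ)+1)))) := by ring
        _ ≤ c₂ ^ (-(ε/((n:ℝ)+1))) * (δ₂ * t^2) :=
            mul_le_mul_of_nonneg_left f5 hc₂e.le
        _ = (c/4) * t^2 := by
            rw [hδ₂def]
            have hne : c₂ ^ (-(ε/((n:ℝ)+1))) ≠ 0 := hc₂e.ne'
            rw [show c₂ ^ (-(ε/((n:ℝ)+1))) * ((c/4) / c₂ ^ (-(ε/((n:ℝ)+1))) * t^2)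
                = ((c/4) / c₂ ^ (-(ε/((n:ℝ)+1))) * c₂ ^ (-(ε/((n:ℝ)+1)))) * t^2 from by ring,
              div_mul_cancel₀ _ hne]
    -- R₀² small compared with (c/4)t²
    have hR₀small : R₀^2 ≤ (c/4) * t^2 := by
      have g1 : 4*R₀^2 ≤ c * t := by
        have := mul_le_mul_of_nonneg_left htR hc.le
        rwa [mul_div_cancel₀ _ hc.ne'] at this
      nlinarith [mul_le_mul_of_nonneg_right g1 ht0]
    rw [div_lt_iff₀ (by positivity : (0:ℝ) < t^2)]
    nlinarith [sq_nonneg t]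
  exact absurd (hev.and hcomb).exists (by
    rintro ⟨t, hle, hlt⟩
    exact absurd hle (not_le.mpr hlt))
end

section
/- Let n ≥ 1, γ > 1, and constants C_v, C_{Dv}, C_ρ, C_p > 0, R₀ > 0, ε > 0. There is no global C² classical solution (ρ, v, p) on [0,∞) × ℝⁿ of the compressible Navier–Stokes system with zero heat conduction having ρ ≥ 0, p ≥ 0, finite positive total mass, finite positive conserved total energy, finite momentum of mass G(t) = ½∫ρ|x|² dx satisfying G''(t) = 2E_k(t) + n(γ−1)E_i(t), and the time-independent decay bounds |v(t,x)| ≤ C_v|x|^{−n}, |D_x v(t,x)| ≤ C_{Dv}|x|^{−n−1}, ρ(t,x) ≤ C_ρ|x|^{−n−2−ε}, p(t,x) ≤ C_p|x|^{−n−ε} for all t ≥ 0 and all |x| > (R₀^{n+1} + (n+1)C_v t)^{1/(n+1)}. -/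
open MeasureTheory Real
open scoped RealInnerProductSpace

set_option maxHeartbeats 1000000 in
/-- Remark 3: there is no global classical solution of the compressible
Navier–Stokes system with zero heat conduction, with positive finite mass and energy, finite
momentum of mass satisfying `G'' = 2E_k + n(γ−1)E_i`, and *time-independent* decay bounds
of the class `K_{NS₀}`. -/
theorem navier_stokes_no_solution_with_constant_bounds
    (n : ℕ) (hn : 1 ≤ n) (γ μ lam : ℝ) (hγ : 1 < γ)
    (hμ : 0 ≤ μ) (hlam : 0 ≤ lam + (2 / n) * μ)
    (Cv CDv Cρ Cp R₀ ε : ℝ)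
    (hCv : 0 < Cv) (hCDv : 0 < CDv) (hCρ : 0 < Cρ) (hCp : 0 < Cp)
    (hR₀ : 0 < R₀) (hε : 0 < ε)
    (ρ p : ℝ × EuclideanSpace ℝ (Fin n) → ℝ)
    (v : ℝ × EuclideanSpace ℝ (Fin n) → EuclideanSpace ℝ (Fin n))
    (T : ℝ × EuclideanSpace ℝ (Fin n) → Fin n → Fin n → ℝ)
    (hρ : ContDiff ℝ 2 ρ) (hv : ContDiff ℝ 2 v) (hp : ContDiff ℝ 2 p)
    (hρnonneg : ∀ q, 0 ≤ q.1 → 0 ≤ ρ q) (hpnonneg : ∀ q, 0 ≤ q.1 → 0 ≤ p q)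
    -- the Newton-law stress tensor
    (hT : ∀ q i j, T q i j =
      μ * (pdX (fun z => v z j) i q + pdX (fun z => v z i) j q)
        + lam * divX v q * (if i = j then 1 else 0))
    -- the compressible Navier–Stokes system with zero heat conduction on [0,∞) × ℝⁿ
    (hcont : ∀ q : ℝ × EuclideanSpace ℝ (Fin n), 0 ≤ q.1 →
      pdT ρ q + divX (fun z => ρ z • v z) q = 0)
    (hmom : ∀ q : ℝ × EuclideanSpace ℝ (Fin n), 0 ≤ q.1 → ∀ i,
      pdT (fun z => ρ z * v z i) q
        + (∑ j, pdX (fun z => ρ z * v z i * v z j) j q) + pdX p i q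
      = ∑ j, pdX (fun z => T z i j) j q)
    (hpress : ∀ q : ℝ × EuclideanSpace ℝ (Fin n), 0 ≤ q.1 →
      pdT p q + (∑ i, v q i * pdX p i q) + γ * p q * divX v q
        = (γ - 1) * ∑ i, ∑ j, T q i j * pdX (fun z => v z i) j q)
    -- finite positive total mass, constant in time
    (m : ℝ) (hm : 0 < m)
    (hmass : ∀ t : ℝ, 0 ≤ t → Integrable (fun x => ρ (t, x)) ∧ (∫ x, ρ (t, x)) = m)
    -- finite positive conserved total energy
    (𝓔 : ℝ) (h𝓔 : 0 < 𝓔)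
    (hEkint : ∀ t : ℝ, 0 ≤ t → Integrable (fun x => ρ (t, x) * ‖v (t, x)‖ ^ 2))
    (hEiint : ∀ t : ℝ, 0 ≤ t → Integrable (fun x => p (t, x)))
    (henergy : ∀ t : ℝ, 0 ≤ t →
      (1/2) * (∫ x, ρ (t, x) * ‖v (t, x)‖ ^ 2) + (1 / (γ - 1)) * (∫ x, p (t, x)) = 𝓔)
    -- finite momentum of mass satisfying G'' = 2E_k + n(γ−1)E_i
    (hGint : ∀ t : ℝ, 0 ≤ t → Integrable (fun x => ρ (t, x) * ‖x‖ ^ 2))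
    (hGdiff : ∀ t : ℝ, 0 ≤ t →
      DifferentiableAt ℝ (fun s => (1/2) * ∫ x, ρ (s, x) * ‖x‖ ^ 2) t)
    (hG'' : ∀ t : ℝ, 0 ≤ t →
      HasDerivAt (deriv (fun s => (1/2) * ∫ x, ρ (s, x) * ‖x‖ ^ 2))
        (2 * ((1/2) * ∫ x, ρ (t, x) * ‖v (t, x)‖ ^ 2)
          + n * (γ - 1) * ((1 / (γ - 1)) * ∫ x, p (t, x))) t)
    -- time-independent decay bounds
    (hdecay : ∀ t : ℝ, 0 ≤ t → ∀ x : EuclideanSpace ℝ (Fin n),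
      (R₀ ^ ((n:ℝ) + 1) + ((n:ℝ) + 1) * Cv * t) ^ (1 / ((n:ℝ) + 1)) < ‖x‖ →
      ‖v (t, x)‖ ≤ Cv * ‖x‖ ^ (-(n:ℝ)) ∧
      ‖fderiv ℝ (fun y => v (t, y)) x‖ ≤ CDv * ‖x‖ ^ (-(n:ℝ) - 1) ∧
      ρ (t, x) ≤ Cρ * ‖x‖ ^ (-(n:ℝ) - 2 - ε) ∧
      p (t, x) ≤ Cp * ‖x‖ ^ (-(n:ℝ) - ε)) :
    False := by
  set g : ℝ → ℝ := (fun s => (1/2) * ∫ x, ρ (s, x) * ‖x‖ ^ 2) with hg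
  set c : ℝ := min 2 ((n:ℝ) * (γ - 1)) with hc
  have hγ' : (0:ℝ) < γ - 1 := by linarith
  have hn' : (1:ℝ) ≤ (n:ℝ) := by exact_mod_cast hn
  have hcpos : 0 < c := lt_min (by norm_num) (by positivity)
  -- lower bound on the second derivative
  have hF : ∀ t : ℝ, 0 ≤ t →
      c * 𝓔 ≤ 2 * ((1/2) * ∫ x, ρ (t, x) * ‖v (t, x)‖ ^ 2)
        + n * (γ - 1) * ((1 / (γ - 1)) * ∫ x, p (t, x)) := by
    intro t ht
    have hEk : 0 ≤ (1/2) * ∫ x, ρ (t, x) * ‖v (t, x)‖ ^ 2 := by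
      have : 0 ≤ ∫ x, ρ (t, x) * ‖v (t, x)‖ ^ 2 :=
        integral_nonneg fun x => mul_nonneg (hρnonneg (t, x) ht) (by positivity)
      linarith
    have hEi : 0 ≤ (1 / (γ - 1)) * ∫ x, p (t, x) := by
      have : 0 ≤ ∫ x, p (t, x) := integral_nonneg fun x => hpnonneg (t, x) ht
      positivity
    have hE : (1/2) * (∫ x, ρ (t, x) * ‖v (t, x)‖ ^ 2)
        + (1 / (γ - 1)) * (∫ x, p (t, x)) = 𝓔 := henergy t ht
    have h1 : c ≤ 2 := min_le_left _ _
    have h2 : c ≤ (n:ℝ) * (γ - 1) := min_le_right _ _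
    nlinarith [mul_le_mul_of_nonneg_right h1 hEk, mul_le_mul_of_nonneg_right h2 hEi]
  -- quadratic lower bound for g
  have hmono : ∀ f f' : ℝ → ℝ, (∀ t ∈ Set.Ici (0:ℝ), HasDerivAt f (f' t) t) →
      (∀ t ∈ Set.Ici (0:ℝ), 0 ≤ f' t) → MonotoneOn f (Set.Ici 0) := by
    intro f f' hd h0
    refine monotoneOn_of_deriv_nonneg (convex_Ici 0)
      (fun t ht => ((hd t ht).differentiableAt.continuousAt).continuousWithinAt)
      (fun t ht => ?_) (fun t ht => ?_)
    · rw [interior_Ici] at ht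
      exact ((hd t (Set.Ioi_subset_Ici_self ht)).differentiableAt).differentiableWithinAt
    · rw [interior_Ici] at ht
      rw [(hd t (Set.Ioi_subset_Ici_self ht)).deriv]
      exact h0 t (Set.Ioi_subset_Ici_self ht)
  have hstep1 : ∀ t : ℝ, 0 ≤ t → deriv g 0 + c * 𝓔 * t ≤ deriv g t := by
    intro t ht
    have hm := hmono (fun s => deriv g s - c * 𝓔 * s) (fun s =>
        (2 * ((1/2) * ∫ x, ρ (s, x) * ‖v (s, x)‖ ^ 2)
          + n * (γ - 1) * ((1 / (γ - 1)) * ∫ x, p (s, x))) - c * 𝓔)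
      (fun s hs => by
        have h1 := hG'' s hs
        have h2 : HasDerivAt (fun u : ℝ => c * 𝓔 * u) (c * 𝓔) s := by
          simpa using (hasDerivAt_id s).const_mul (c * 𝓔)
        exact h1.sub h2)
      (fun s hs => sub_nonneg.2 (hF s hs))
    have := hm (Set.self_mem_Ici) (Set.mem_Ici.2 ht) ht
    simp only at this
    linarith
  have hstep2 : ∀ t : ℝ, 0 ≤ t →
      g 0 + deriv g 0 * t + c * 𝓔 / 2 * t ^ 2 ≤ g t := by
    intro t ht
    have hm := hmono (fun s => g s - (deriv g 0 * s + c * 𝓔 / 2 * s ^ 2))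
      (fun s => deriv g s - (deriv g 0 + c * 𝓔 * s))
      (fun s hs => by
        have h1 : HasDerivAt g (deriv g s) s := (hGdiff s hs).hasDerivAt
        have h2 : HasDerivAt (fun u : ℝ => deriv g 0 * u + c * 𝓔 / 2 * u ^ 2)
            (deriv g 0 + c * 𝓔 * s) s := by
          have ha : HasDerivAt (fun u : ℝ => deriv g 0 * u) (deriv g 0) s := by
            simpa using (hasDerivAt_id s).const_mul (deriv g 0)
          have hb : HasDerivAt (fun u : ℝ => c * 𝓔 / 2 * u ^ 2) (c * 𝓔 / 2 * (2 * s)) s := by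
            simpa using ((hasDerivAt_pow 2 s).const_mul (c * 𝓔 / 2))
          have := ha.add hb
          exact this.congr_deriv (by ring)
        exact h1.sub h2)
      (fun s hs => sub_nonneg.2 (hstep1 s hs))
    have := hm (Set.self_mem_Ici) (Set.mem_Ici.2 ht) ht
    simp only at this
    linarith
  -- linear upper bound for g
  set K : ℝ := ∫ x : EuclideanSpace ℝ (Fin n),
      (Cρ * (1 + 1/R₀) ^ ((n:ℝ) + ε)) * (1 + ‖x‖) ^ (-((n:ℝ) + ε)) with hK
  have hnε : ((Module.finrank ℝ (EuclideanSpace ℝ (Fin n))) : ℝ) < (n:ℝ) + ε := by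
    rw [finrank_euclideanSpace_fin]; linarith
  have hgint : Integrable (fun x : EuclideanSpace ℝ (Fin n) =>
      (Cρ * (1 + 1/R₀) ^ ((n:ℝ) + ε)) * (1 + ‖x‖) ^ (-((n:ℝ) + ε))) :=
    (integrable_one_add_norm hnε).const_mul _
  have hupper : ∀ t : ℝ, 0 ≤ t →
      g t ≤ (1/2) * (m * (1 + R₀ ^ ((n:ℝ)+1)) + K) + (1/2) * (m * ((n:ℝ)+1) * Cv) * t := by
    intro t ht
    set y : ℝ := R₀ ^ ((n:ℝ) + 1) + ((n:ℝ) + 1) * Cv * t with hy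
    have hy0 : 0 < y := by
      have : 0 < R₀ ^ ((n:ℝ) + 1) := Real.rpow_pos_of_pos hR₀ _
      have : 0 ≤ ((n:ℝ) + 1) * Cv * t := by positivity
      nlinarith [Real.rpow_pos_of_pos hR₀ ((n:ℝ)+1)]
    set R : ℝ := y ^ (1 / ((n:ℝ) + 1)) with hR
    have hRpos : 0 < R := Real.rpow_pos_of_pos hy0 _
    have hn1 : ((n:ℝ) + 1) ≠ 0 := by positivity
    have hR₀R : R₀ ≤ R := by
      have h1 : R₀ ^ ((n:ℝ)+1) ≤ y := by
        have : 0 ≤ ((n:ℝ) + 1) * Cv * t := by positivity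
        linarith
      calc R₀ = (R₀ ^ ((n:ℝ)+1)) ^ (1 / ((n:ℝ)+1)) := by
              rw [← Real.rpow_mul hR₀.le, mul_one_div, div_self hn1, Real.rpow_one]
        _ ≤ R := Real.rpow_le_rpow (Real.rpow_pos_of_pos hR₀ _).le h1 (by positivity)
    have hRsq : R ^ 2 ≤ 1 + y := by
      have hrw : R ^ 2 = y ^ (2 / ((n:ℝ)+1)) := by
        rw [hR, ← Real.rpow_natCast (y ^ (1/((n:ℝ)+1))) 2, ← Real.rpow_mul hy0.le]
        congr 1
        push_cast
        ring
      rw [hrw]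
      rcases le_total y 1 with h1 | h1
      · have := Real.rpow_le_one hy0.le h1 (by positivity : (0:ℝ) ≤ 2 / ((n:ℝ)+1))
        linarith
      · have h2 : 2 / ((n:ℝ)+1) ≤ 1 := by
          rw [div_le_one (by positivity)]; linarith
        have := Real.rpow_le_rpow_of_exponent_le h1 h2
        rw [Real.rpow_one] at this
        linarith
    set s : Set (EuclideanSpace ℝ (Fin n)) := Metric.closedBall 0 R with hs
    have hsm : MeasurableSet s := measurableSet_closedBall
    have hint := hGint t ht
    have hsplit : (∫ x, ρ (t, x) * ‖x‖ ^ 2)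
        = (∫ x in s, ρ (t, x) * ‖x‖ ^ 2) + ∫ x in sᶜ, ρ (t, x) * ‖x‖ ^ 2 :=
      (integral_add_compl hsm hint).symm
    -- inner estimate
    have hinner : (∫ x in s, ρ (t, x) * ‖x‖ ^ 2) ≤ m * R ^ 2 := by
      have h1 : (∫ x in s, ρ (t, x) * ‖x‖ ^ 2) ≤ ∫ x in s, ρ (t, x) * R ^ 2 := by
        refine setIntegral_mono_on hint.integrableOn
          (((hmass t ht).1.mul_const (R ^ 2)).integrableOn) hsm (fun x hx => ?_)
        have hxR : ‖x‖ ≤ R := by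
          rwa [hs, Metric.mem_closedBall, dist_zero_right] at hx
        exact mul_le_mul_of_nonneg_left
          (pow_le_pow_left₀ (norm_nonneg x) hxR 2) (hρnonneg (t, x) ht)
      have h2 : (∫ x in s, ρ (t, x) * R ^ 2) = (∫ x in s, ρ (t, x)) * R ^ 2 :=
        integral_mul_const _ _
      have h3 : (∫ x in s, ρ (t, x)) ≤ m := by
        rw [← (hmass t ht).2]
        exact setIntegral_le_integral (hmass t ht).1
          (Filter.Eventually.of_forall fun x => hρnonneg (t, x) ht)
      calc (∫ x in s, ρ (t, x) * ‖x‖ ^ 2) ≤ (∫ x in s, ρ (t, x)) * R ^ 2 := by rw [← h2]; exact h1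
        _ ≤ m * R ^ 2 := mul_le_mul_of_nonneg_right h3 (by positivity)
    -- outer estimate
    have houter : (∫ x in sᶜ, ρ (t, x) * ‖x‖ ^ 2) ≤ K := by
      have h1 : (∫ x in sᶜ, ρ (t, x) * ‖x‖ ^ 2)
          ≤ ∫ x in sᶜ, (Cρ * (1 + 1/R₀) ^ ((n:ℝ) + ε)) * (1 + ‖x‖) ^ (-((n:ℝ) + ε)) := by
        refine setIntegral_mono_on hint.integrableOn hgint.integrableOn hsm.compl
          (fun x hx => ?_)
        have hxR : R < ‖x‖ := by
          rw [Set.mem_compl_iff, hs, Metric.mem_closedBall, dist_zero_right, not_le] at hx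
          exact hx
        have hx0 : 0 < ‖x‖ := lt_trans hRpos hxR
        have hρx := (hdecay t ht x hxR).2.2.1
        have hb1 : ρ (t, x) * ‖x‖ ^ 2 ≤ Cρ * ‖x‖ ^ (-((n:ℝ) + ε)) := by
          have := mul_le_mul_of_nonneg_right hρx (by positivity : (0:ℝ) ≤ ‖x‖ ^ 2)
          calc ρ (t, x) * ‖x‖ ^ 2 ≤ Cρ * ‖x‖ ^ (-(n:ℝ) - 2 - ε) * ‖x‖ ^ 2 := this
            _ = Cρ * ‖x‖ ^ (-((n:ℝ) + ε)) := by
              rw [mul_assoc, ← Real.rpow_natCast ‖x‖ 2, ← Real.rpow_add hx0]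
              congr 1
              push_cast
              ring
        have hb2 : ‖x‖ ^ (-((n:ℝ) + ε))
            ≤ (1 + 1/R₀) ^ ((n:ℝ) + ε) * (1 + ‖x‖) ^ (-((n:ℝ) + ε)) := by
          have hxR₀ : R₀ ≤ ‖x‖ := le_trans hR₀R hxR.le
          have hcomp : 1 + ‖x‖ ≤ (1 + 1/R₀) * ‖x‖ := by
            have h1 : 1 ≤ ‖x‖ / R₀ := (one_le_div hR₀).2 hxR₀
            have h2 : (1 + 1/R₀) * ‖x‖ = ‖x‖ + ‖x‖ / R₀ := by
              field_simp
            linarith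
          have hKb : 0 < (1 + 1/R₀) := by positivity
          have h4 : (1 + ‖x‖) ^ ((n:ℝ) + ε)
              ≤ (1 + 1/R₀) ^ ((n:ℝ) + ε) * ‖x‖ ^ ((n:ℝ) + ε) := by
            calc (1 + ‖x‖) ^ ((n:ℝ) + ε) ≤ ((1 + 1/R₀) * ‖x‖) ^ ((n:ℝ) + ε) :=
                  Real.rpow_le_rpow (by positivity) hcomp (by positivity)
              _ = (1 + 1/R₀) ^ ((n:ℝ) + ε) * ‖x‖ ^ ((n:ℝ) + ε) :=
                  Real.mul_rpow hKb.le hx0.le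
          have ha : 0 < ‖x‖ ^ ((n:ℝ) + ε) := Real.rpow_pos_of_pos hx0 _
          have hbp : 0 < (1 + ‖x‖) ^ ((n:ℝ) + ε) := Real.rpow_pos_of_pos (by positivity) _
          rw [Real.rpow_neg hx0.le, Real.rpow_neg (by positivity : (0:ℝ) ≤ 1 + ‖x‖),
            ← div_eq_mul_inv, le_div_iff₀ hbp]
          calc (‖x‖ ^ ((n:ℝ) + ε))⁻¹ * (1 + ‖x‖) ^ ((n:ℝ) + ε)
              ≤ (‖x‖ ^ ((n:ℝ) + ε))⁻¹ * ((1 + 1/R₀) ^ ((n:ℝ) + ε) * ‖x‖ ^ ((n:ℝ) + ε)) :=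
                mul_le_mul_of_nonneg_left h4 (by positivity)
            _ = (1 + 1/R₀) ^ ((n:ℝ) + ε) := by field_simp
        calc ρ (t, x) * ‖x‖ ^ 2 ≤ Cρ * ‖x‖ ^ (-((n:ℝ) + ε)) := hb1
          _ ≤ Cρ * ((1 + 1/R₀) ^ ((n:ℝ) + ε) * (1 + ‖x‖) ^ (-((n:ℝ) + ε))) :=
              mul_le_mul_of_nonneg_left hb2 hCρ.le
          _ = (Cρ * (1 + 1/R₀) ^ ((n:ℝ) + ε)) * (1 + ‖x‖) ^ (-((n:ℝ) + ε)) := by ring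
      have h2 : (∫ x in sᶜ, (Cρ * (1 + 1/R₀) ^ ((n:ℝ) + ε)) * (1 + ‖x‖) ^ (-((n:ℝ) + ε))) ≤ K :=
        setIntegral_le_integral hgint (Filter.Eventually.of_forall fun x => by positivity)
      linarith
    have : (∫ x, ρ (t, x) * ‖x‖ ^ 2) ≤ m * (1 + y) + K := by
      rw [hsplit]
      have : m * R ^ 2 ≤ m * (1 + y) := mul_le_mul_of_nonneg_left hRsq hm.le
      linarith
    have hgt : g t = (1/2) * ∫ x, ρ (t, x) * ‖x‖ ^ 2 := rfl
    rw [hgt, hy] at *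
    nlinarith [this]
  -- contradiction
  set A : ℝ := (1/2) * (m * (1 + R₀ ^ ((n:ℝ)+1)) + K) with hA
  set B : ℝ := (1/2) * (m * ((n:ℝ)+1) * Cv) with hB
  set a : ℝ := A - g 0 with ha
  set b : ℝ := B - deriv g 0 with hb
  set k : ℝ := c * 𝓔 / 2 with hk
  have hkpos : 0 < k := by positivity
  clear_value A B a b k
  set T : ℝ := (|a| + |b| + 1) / k + 1 with hT2
  clear_value T
  have hT1 : (1:ℝ) ≤ T := by
    have : 0 ≤ (|a| + |b| + 1) / k := by positivity
    linarith
  have hTnn : 0 ≤ T := by linarith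
  have hlow := hstep2 T hTnn
  have hhigh := hupper T hTnn
  have hkT : |a| + |b| + 1 ≤ k * T := by
    rw [hT2]
    have : k * ((|a| + |b| + 1) / k + 1) = (|a| + |b| + 1) + k := by
      field_simp
    rw [this]
    linarith
  have hmain : k * T ^ 2 ≤ a + b * T := by
    have : g 0 + deriv g 0 * T + k * T ^ 2 ≤ A + B * T := le_trans hlow hhigh
    rw [ha, hb]; linarith
  nlinarith [abs_nonneg a, abs_nonneg b, le_abs_self a, le_abs_self b,
    mul_le_mul_of_nonneg_right hkT hTnn, mul_le_mul_of_nonneg_right hT1 (abs_nonneg a)]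
end

section
/- Let K > 0, λ > 2, and a₀ ≥ 0. Then the integro-differential Cauchy problem a'(t) = −a(t)² + K exp(−λ∫₀ᵗ a(s)ds), a(0) = a₀, has a unique C¹ solution defined on all of [0,∞); moreover a(t) ≥ 0 for all t ≥ 0, a is bounded, and there exists a constant C > 0 such that a(t) ≤ C/(1+t) for all t ≥ 0, i.e. a(t) = O(t^{−1}) as t → ∞. -/
open Real intervalIntegral

section ODEHelpers
open Set

lemma abs_exp_sub_exp_le {u v c : ℝ} (hu : u ≤ c) (hv : v ≤ c) :
    |Real.exp u - Real.exp v| ≤ Real.exp c * |u - v| := by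
  wlog h : v ≤ u generalizing u v
  · rw [abs_sub_comm, abs_sub_comm u v]; exact this hv hu (le_of_not_ge h)
  have h1 : Real.exp v * Real.exp (u - v) = Real.exp u := by
    rw [← Real.exp_add]; ring_nf
  have h2 : 1 + -(u - v) ≤ Real.exp (-(u - v)) := by
    have := Real.add_one_le_exp (-(u - v)); linarith
  have h3 : Real.exp (u - v) * Real.exp (-(u - v)) = 1 := by
    rw [← Real.exp_add]; simp
  have h4 : Real.exp u ≤ Real.exp c := Real.exp_le_exp.2 hu
  have h5 : Real.exp v ≤ Real.exp u := Real.exp_le_exp.2 h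
  rw [abs_of_nonneg (by linarith), abs_of_nonneg (by linarith)]
  nlinarith [Real.exp_pos (u - v), Real.exp_pos v, Real.exp_pos u]

/-- If `f(0) ≥ 0` and at any point where `f < 0` the derivative is positive,
then `f ≥ 0` on `[0, T]`. -/
lemma stay_nonneg {f df : ℝ → ℝ} {T : ℝ}
    (hder : ∀ t ∈ Set.Icc (0:ℝ) T, HasDerivAt f (df t) t)
    (h0 : 0 ≤ f 0)
    (hpos : ∀ t ∈ Set.Icc (0:ℝ) T, f t < 0 → 0 < df t) :
    ∀ t ∈ Set.Icc (0:ℝ) T, 0 ≤ f t := by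
  intro t ht
  by_contra hneg
  push_neg at hneg
  have ht0 : 0 < t := by
    rcases eq_or_lt_of_le ht.1 with h | h
    · exact absurd (h ▸ h0) (not_le.2 hneg)
    · exact h
  set S := {u : ℝ | u ∈ Set.Icc 0 t ∧ 0 ≤ f u} with hS
  have hS0 : (0:ℝ) ∈ S := ⟨⟨le_rfl, ht0.le⟩, h0⟩
  have hSne : S.Nonempty := ⟨0, hS0⟩
  have hSb : BddAbove S := ⟨t, fun u hu => hu.1.2⟩
  set s := sSup S with hs
  have hsmem : s ∈ Set.Icc 0 t := ⟨le_csSup hSb hS0, csSup_le hSne fun u hu => hu.1.2⟩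
  have hcont : ∀ u ∈ Set.Icc 0 t, ContinuousAt f u := fun u hu =>
    (hder u ⟨hu.1, hu.2.trans ht.2⟩).continuousAt
  have hfs : 0 ≤ f s := by
    have h1 : s ∈ closure S := (isLUB_csSup hSne hSb).mem_closure hSne
    have h2 : f s ∈ closure (f '' S) :=
      ((hcont s hsmem).continuousWithinAt).mem_closure_image h1
    have h3 : closure (f '' S) ⊆ Set.Ici 0 :=
      closure_minimal (by rintro _ ⟨u, hu, rfl⟩; exact hu.2) isClosed_Ici
    exact h3 h2
  have hst : s < t := by
    rcases eq_or_lt_of_le hsmem.2 with h | h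
    · exact absurd (h ▸ hfs) (not_le.2 hneg)
    · exact h
  have hneg' : ∀ u ∈ Set.Ioo s t, f u < 0 := by
    intro u hu
    by_contra h
    push_neg at h
    exact absurd (le_csSup hSb ⟨⟨hsmem.1.trans hu.1.le, hu.2.le⟩, h⟩) (not_le.2 hu.1)
  have hmono : StrictMonoOn f (Set.Icc s t) := by
    apply strictMonoOn_of_deriv_pos (convex_Icc s t)
    · exact fun u hu => (hcont u ⟨hsmem.1.trans hu.1, hu.2⟩).continuousWithinAt
    · intro u hu
      rw [interior_Icc] at hu
      have hu' : u ∈ Set.Icc (0:ℝ) T := ⟨hsmem.1.trans hu.1.le, (hu.2.le.trans ht.2)⟩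
      rw [(hder u hu').deriv]
      exact hpos u hu' (hneg' u hu)
  have := hmono ⟨le_rfl, hst.le⟩ ⟨hst.le, le_rfl⟩ hst
  linarith

/-- clamp to `[0, c]` -/
noncomputable def gcl (c x : ℝ) : ℝ := min (max x 0) c

/-- truncated vector field for the system `(a, I)' = (-a² + K e^{-λ I}, a)` -/
noncomputable def Fv (K lam c : ℝ) (p : ℝ × ℝ) : ℝ × ℝ :=
  (-(gcl c p.1)^2 + K * Real.exp (-(lam * max p.2 0)), gcl c p.1)

lemma gcl_nonneg {c x : ℝ} (hc : 0 ≤ c) : 0 ≤ gcl c x := le_min (le_max_right _ _) hc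

lemma gcl_le {c x : ℝ} : gcl c x ≤ c := min_le_right _ _

lemma gcl_lip (c x y : ℝ) : |gcl c x - gcl c y| ≤ |x - y| := by
  calc |gcl c x - gcl c y| ≤ max |max x 0 - max y 0| |c - c| :=
        abs_min_sub_min_le_max _ _ _ _
    _ ≤ |x - y| := by
        rw [sub_self, abs_zero]
        refine max_le ?_ (abs_nonneg _)
        calc |max x 0 - max y 0| ≤ max |x - y| |(0:ℝ) - 0| := abs_max_sub_max_le_max _ _ _ _
          _ ≤ |x - y| := by simp

lemma Fv_lipschitz {K lam c : ℝ} (hK : 0 < K) (hlam : 0 < lam) (hc : 0 ≤ c) :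
    LipschitzWith (Real.toNNReal (2*c + K*lam + 1)) (Fv K lam c) := by
  apply LipschitzWith.of_dist_le_mul
  intro p q
  rw [Real.coe_toNNReal _ (by positivity)]
  rw [Prod.dist_eq, Prod.dist_eq]
  simp only [Real.dist_eq]
  set d1 := |p.1 - q.1|
  set d2 := |p.2 - q.2|
  have hd1 : 0 ≤ d1 := abs_nonneg _
  have hd2 : 0 ≤ d2 := abs_nonneg _
  have hgl : |gcl c p.1 - gcl c q.1| ≤ d1 := gcl_lip c p.1 q.1
  have hg1 : 0 ≤ gcl c p.1 := gcl_nonneg hc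
  have hg2 : 0 ≤ gcl c q.1 := gcl_nonneg hc
  have hg1' : gcl c p.1 ≤ c := gcl_le
  have hg2' : gcl c q.1 ≤ c := gcl_le
  have hsq : |(gcl c p.1)^2 - (gcl c q.1)^2| ≤ 2*c*d1 := by
    calc |(gcl c p.1)^2 - (gcl c q.1)^2| = |gcl c p.1 - gcl c q.1| * |gcl c p.1 + gcl c q.1| := by
          rw [← abs_mul]; ring_nf
      _ ≤ d1 * (2*c) := by
          apply mul_le_mul hgl _ (abs_nonneg _) hd1
          rw [abs_of_nonneg (by linarith)]; linarith
      _ = 2*c*d1 := by ring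
  have hexp : |Real.exp (-(lam * max p.2 0)) - Real.exp (-(lam * max q.2 0))| ≤ lam * d2 := by
    have h1 : -(lam * max p.2 0) ≤ 0 := by
      have : 0 ≤ max p.2 0 := le_max_right _ _
      nlinarith
    have h2 : -(lam * max q.2 0) ≤ 0 := by
      have : 0 ≤ max q.2 0 := le_max_right _ _
      nlinarith
    calc |Real.exp (-(lam * max p.2 0)) - Real.exp (-(lam * max q.2 0))|
        ≤ Real.exp 0 * |(-(lam * max p.2 0)) - (-(lam * max q.2 0))| :=
          abs_exp_sub_exp_le h1 h2
      _ = lam * |max p.2 0 - max q.2 0| := by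
          rw [Real.exp_zero, one_mul,
            show (-(lam * max p.2 0)) - (-(lam * max q.2 0)) = lam * (max q.2 0 - max p.2 0) by ring,
            abs_mul, abs_of_pos hlam, abs_sub_comm]
      _ ≤ lam * d2 := by
          apply mul_le_mul_of_nonneg_left _ hlam.le
          calc |max p.2 0 - max q.2 0| ≤ max |p.2 - q.2| |(0:ℝ) - 0| :=
                abs_max_sub_max_le_max _ _ _ _
            _ ≤ d2 := by simp; exact le_rfl
  have hfst : |(-(gcl c p.1)^2 + K * Real.exp (-(lam * max p.2 0))) -
      (-(gcl c q.1)^2 + K * Real.exp (-(lam * max q.2 0)))| ≤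
      (2*c + K*lam + 1) * max d1 d2 := by
    have hle1 : d1 ≤ max d1 d2 := le_max_left _ _
    have hle2 : d2 ≤ max d1 d2 := le_max_right _ _
    calc |(-(gcl c p.1)^2 + K * Real.exp (-(lam * max p.2 0))) -
        (-(gcl c q.1)^2 + K * Real.exp (-(lam * max q.2 0)))|
        ≤ |(gcl c p.1)^2 - (gcl c q.1)^2| +
          K * |Real.exp (-(lam * max p.2 0)) - Real.exp (-(lam * max q.2 0))| := by
          have := abs_sub (-(gcl c p.1)^2 + K * Real.exp (-(lam * max p.2 0)))
          calc _ = |((gcl c q.1)^2 - (gcl c p.1)^2) + K * (Real.exp (-(lam * max p.2 0)) - Real.exp (-(lam * max q.2 0)))| := by ring_nf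
            _ ≤ |(gcl c q.1)^2 - (gcl c p.1)^2| + |K * (Real.exp (-(lam * max p.2 0)) - Real.exp (-(lam * max q.2 0)))| := abs_add_le _ _
            _ = |(gcl c p.1)^2 - (gcl c q.1)^2| + K * |Real.exp (-(lam * max p.2 0)) - Real.exp (-(lam * max q.2 0))| := by
                rw [abs_sub_comm, abs_mul, abs_of_pos hK]
      _ ≤ 2*c*d1 + K * (lam * d2) := by
          refine add_le_add hsq (mul_le_mul_of_nonneg_left hexp hK.le)
      _ ≤ (2*c + K*lam + 1) * max d1 d2 := by
          have hm : 0 ≤ max d1 d2 := le_trans hd1 (le_max_left d1 d2)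
          nlinarith [mul_le_mul_of_nonneg_left hle1 (by positivity : (0:ℝ) ≤ 2*c),
            mul_le_mul_of_nonneg_left hle2 (by positivity : (0:ℝ) ≤ K*lam)]
  have hsnd : |gcl c p.1 - gcl c q.1| ≤ (2*c + K*lam + 1) * max d1 d2 := by
    calc |gcl c p.1 - gcl c q.1| ≤ d1 := hgl
      _ ≤ max d1 d2 := le_max_left _ _
      _ ≤ (2*c + K*lam + 1) * max d1 d2 := by
          have hm : 0 ≤ max d1 d2 := le_trans hd1 (le_max_left d1 d2)
          nlinarith [mul_nonneg (show (0:ℝ) ≤ 2*c + K*lam by positivity) hm]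
  exact max_le hfst hsnd

lemma Fv_norm_le {K lam c : ℝ} (hK : 0 < K) (hlam : 0 < lam) (hc : 0 ≤ c) (p : ℝ × ℝ) :
    ‖Fv K lam c p‖ ≤ c^2 + K + c := by
  rw [Prod.norm_def]
  simp only [Fv]
  have hg1 : 0 ≤ gcl c p.1 := gcl_nonneg hc
  have hg1' : gcl c p.1 ≤ c := gcl_le
  have he : 0 < Real.exp (-(lam * max p.2 0)) := Real.exp_pos _
  have he1 : Real.exp (-(lam * max p.2 0)) ≤ 1 := by
    have h0 : (0:ℝ) ≤ max p.2 0 := le_max_right _ _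
    exact Real.exp_le_one_iff.2 (by nlinarith)
  refine max_le ?_ ?_
  · rw [Real.norm_eq_abs, abs_le]
    constructor
    · nlinarith
    · nlinarith
  · rw [Real.norm_eq_abs, abs_of_nonneg hg1]; nlinarith
lemma exists_global (K lam c : ℝ) (hK : 0 < K) (hlam : 0 < lam) (hc : 0 ≤ c) (x₀ : ℝ × ℝ) :
    ∃ x : ℝ → ℝ × ℝ, x 0 = x₀ ∧ ∀ t : ℝ, HasDerivAt x (Fv K lam c (x t)) t := by
  have hlip := Fv_lipschitz hK hlam hc
  set L := Real.toNNReal (2*c + K*lam + 1) with hL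
  set Cb := c^2 + K + c with hCb
  have hloc : ∀ n : ℕ, ∃ f : ℝ → ℝ × ℝ, f 0 = x₀ ∧
      ∀ t ∈ Set.Ioo (-(n+1:ℝ)) (n+1), HasDerivAt f (Fv K lam c (f t)) t := by
    intro n
    have hn : (0:ℝ) ≤ n := n.cast_nonneg
    have hCb0 : 0 ≤ Cb := by positivity
    have hpl : IsPicardLindelof (fun _ p => Fv K lam c p) (tmin := -(n+1:ℝ)) (tmax := n+1)
        ⟨0, by constructor <;> linarith⟩ x₀ (Real.toNNReal (Cb*(n+1))) 0 (Real.toNNReal Cb) L :=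
      IsPicardLindelof.of_time_independent
        (fun x _ => by rw [Real.coe_toNNReal _ hCb0]; exact Fv_norm_le hK hlam hc x)
        hlip.lipschitzOnWith
        (by
          rw [Real.coe_toNNReal _ hCb0, Real.coe_toNNReal _ (by positivity)]
          simp only [NNReal.coe_zero, sub_zero, zero_sub, neg_neg, max_self]
          exact le_rfl)
    obtain ⟨f, hf0, hf⟩ := hpl.exists_eq_forall_mem_Icc_hasDerivWithinAt₀
    exact ⟨f, hf0, fun t ht => (hf t (Set.Ioo_subset_Icc_self ht)).hasDerivAt
      (Icc_mem_nhds ht.1 ht.2)⟩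
  choose fs hfs0 hfs using hloc
  have key : ∀ (m n : ℕ) (t : ℝ), |t| < (m:ℝ)+1 → |t| < (n:ℝ)+1 → fs m t = fs n t := by
    intro m n t hm hn
    set k := min m n with hk
    have hkm : (k:ℝ) ≤ m := by exact_mod_cast Nat.cast_le.2 (min_le_left m n)
    have hkn : (k:ℝ) ≤ n := by exact_mod_cast Nat.cast_le.2 (min_le_right m n)
    have hkr : (k:ℝ) + 1 = min ((m:ℝ)+1) ((n:ℝ)+1) := by
      rw [hk]
      push_cast [Nat.cast_min]
      rw [min_add_add_right]
    have htk : |t| < (k:ℝ) + 1 := by rw [hkr]; exact lt_min hm hn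
    have hsub : Set.Ioo (-((k:ℝ)+1)) ((k:ℝ)+1) ⊆ Set.Ioo (-((m:ℝ)+1)) ((m:ℝ)+1) :=
      Set.Ioo_subset_Ioo (by linarith) (by linarith)
    have hsub' : Set.Ioo (-((k:ℝ)+1)) ((k:ℝ)+1) ⊆ Set.Ioo (-((n:ℝ)+1)) ((n:ℝ)+1) :=
      Set.Ioo_subset_Ioo (by linarith) (by linarith)
    have h0k : (0:ℝ) ∈ Set.Ioo (-((k:ℝ)+1)) ((k:ℝ)+1) := by
      have hk0 : (0:ℝ) ≤ (k:ℝ) := k.cast_nonneg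
      exact ⟨by linarith, by linarith⟩
    have := ODE_solution_unique_of_mem_Ioo (v := fun _ p => Fv K lam c p)
      (s := fun _ => (Set.univ : Set (ℝ × ℝ))) (K := L)
      (fun _ _ => hlip.lipschitzOnWith) h0k
      (fun u hu => ⟨hfs m u (hsub hu), trivial⟩)
      (fun u hu => ⟨hfs n u (hsub' hu), trivial⟩)
      ((hfs0 m).trans (hfs0 n).symm)
    exact this ⟨(abs_lt.1 htk).1, (abs_lt.1 htk).2⟩
  refine ⟨fun t => fs ⌈|t|⌉₊ t, ?_, ?_⟩
  · simp only [abs_zero, Nat.ceil_zero]; exact hfs0 0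
  · intro t
    set N := ⌈|t|⌉₊ + 1 with hN
    have htN : |t| < (N:ℝ) + 1 := by
      have := Nat.le_ceil |t|
      push_cast [hN]
      linarith
    have hev : (fun s => fs ⌈|s|⌉₊ s) =ᶠ[nhds t] fs N := by
      refine Filter.eventuallyEq_of_mem (Metric.ball_mem_nhds t one_pos) fun s hs => ?_
      rw [Metric.mem_ball] at hs
      have hs : dist s t < 1 := hs
      have hsabs : |s| < (⌈|t|⌉₊:ℝ) + 1 := by
        have h1 : |s| ≤ |t| + |s - t| := by
          calc |s| = |t + (s - t)| := by ring_nf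
            _ ≤ |t| + |s - t| := abs_add_le _ _
        have h2 : |s - t| < 1 := by rwa [Real.dist_eq] at hs
        have := Nat.le_ceil |t|
        linarith
      have hsN : |s| < (N:ℝ) + 1 := by push_cast [hN]; linarith
      have hsc : |s| < (⌈|s|⌉₊:ℝ) + 1 := by linarith [Nat.le_ceil |s|]
      exact key ⌈|s|⌉₊ N s hsc hsN
    have htN' : |t| < (N:ℝ) + 1 := htN
    have hd := hfs N t ⟨(abs_lt.1 htN').1, (abs_lt.1 htN').2⟩
    have hval : fs ⌈|t|⌉₊ t = fs N t := by
      have hsc : |t| < (⌈|t|⌉₊:ℝ) + 1 := by linarith [Nat.le_ceil |t|]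
      exact key ⌈|t|⌉₊ N t hsc htN
    refine (hev.hasDerivAt_iff).2 ?_
    simpa only [hval] using hd

lemma Phi_lipschitzOn {K lam ρ : ℝ} (hK : 0 < K) (hlam : 0 < lam) (hρ : 0 ≤ ρ) :
    LipschitzOnWith (Real.toNNReal (2*ρ + K*(lam * Real.exp (lam*ρ)) + 1))
      (fun p : ℝ × ℝ => (-(p.1)^2 + K * Real.exp (-lam * p.2), p.1))
      (Metric.closedBall 0 ρ) := by
  apply LipschitzOnWith.of_dist_le_mul
  intro p hp q hq
  rw [Real.coe_toNNReal _ (by positivity)]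
  rw [mem_closedBall_zero_iff, Prod.norm_def] at hp hq
  have hp1 : |p.1| ≤ ρ := le_trans (by rw [Real.norm_eq_abs] at *; exact le_max_left _ _) hp
  have hp2 : |p.2| ≤ ρ := le_trans (by rw [Real.norm_eq_abs] at *; exact le_max_right _ _) hp
  have hq1 : |q.1| ≤ ρ := le_trans (by rw [Real.norm_eq_abs] at *; exact le_max_left _ _) hq
  have hq2 : |q.2| ≤ ρ := le_trans (by rw [Real.norm_eq_abs] at *; exact le_max_right _ _) hq
  rw [Prod.dist_eq, Prod.dist_eq]
  simp only [Real.dist_eq]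
  set d1 := |p.1 - q.1|
  set d2 := |p.2 - q.2|
  have hd1 : 0 ≤ d1 := abs_nonneg _
  have hm : 0 ≤ max d1 d2 := le_trans hd1 (le_max_left _ _)
  have hsq : |p.1^2 - q.1^2| ≤ 2*ρ*d1 := by
    calc |p.1^2 - q.1^2| = |p.1 - q.1| * |p.1 + q.1| := by rw [← abs_mul]; ring_nf
      _ ≤ d1 * (2*ρ) := by
          have h1 := abs_le.1 hp1
          have h2 := abs_le.1 hq1
          have h3 : |p.1 + q.1| ≤ 2*ρ := by
            rw [abs_le]; constructor <;> linarith [h1.1, h1.2, h2.1, h2.2]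
          exact mul_le_mul_of_nonneg_left h3 hd1
      _ = 2*ρ*d1 := by ring
  have hexp : |Real.exp (-lam * p.2) - Real.exp (-lam * q.2)| ≤ lam * Real.exp (lam*ρ) * d2 := by
    have h1 : -lam * p.2 ≤ lam * ρ := by nlinarith [(abs_le.1 hp2).1]
    have h2 : -lam * q.2 ≤ lam * ρ := by nlinarith [(abs_le.1 hq2).1]
    calc |Real.exp (-lam * p.2) - Real.exp (-lam * q.2)|
        ≤ Real.exp (lam*ρ) * |(-lam * p.2) - (-lam * q.2)| := abs_exp_sub_exp_le h1 h2
      _ = lam * Real.exp (lam*ρ) * d2 := by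
          rw [show (-lam * p.2) - (-lam * q.2) = lam * (q.2 - p.2) by ring, abs_mul,
            abs_of_pos hlam, abs_sub_comm]
          ring
  have key1 : |(-(p.1)^2 + K * Real.exp (-lam * p.2)) - (-(q.1)^2 + K * Real.exp (-lam * q.2))|
      ≤ (2*ρ + K*(lam * Real.exp (lam*ρ)) + 1) * max d1 d2 := by
    calc |(-(p.1)^2 + K * Real.exp (-lam * p.2)) - (-(q.1)^2 + K * Real.exp (-lam * q.2))|
        = |(q.1^2 - p.1^2) + K * (Real.exp (-lam * p.2) - Real.exp (-lam * q.2))| := by ring_nf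
      _ ≤ |q.1^2 - p.1^2| + |K * (Real.exp (-lam * p.2) - Real.exp (-lam * q.2))| := abs_add_le _ _
      _ = |p.1^2 - q.1^2| + K * |Real.exp (-lam * p.2) - Real.exp (-lam * q.2)| := by
          rw [abs_sub_comm, abs_mul, abs_of_pos hK]
      _ ≤ 2*ρ*d1 + K * (lam * Real.exp (lam*ρ) * d2) := add_le_add hsq
            (mul_le_mul_of_nonneg_left hexp hK.le)
      _ ≤ (2*ρ + K*(lam * Real.exp (lam*ρ)) + 1) * max d1 d2 := by
          nlinarith [mul_le_mul_of_nonneg_left (le_max_left d1 d2) (show (0:ℝ) ≤ 2*ρ by positivity),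
            mul_le_mul_of_nonneg_left (le_max_right d1 d2)
              (show (0:ℝ) ≤ K*(lam * Real.exp (lam*ρ)) by positivity)]
  have key2 : |p.1 - q.1| ≤ (2*ρ + K*(lam * Real.exp (lam*ρ)) + 1) * max d1 d2 := by
    have : d1 ≤ max d1 d2 := le_max_left _ _
    nlinarith [mul_nonneg (show (0:ℝ) ≤ 2*ρ + K*(lam * Real.exp (lam*ρ)) by positivity) hm]
  exact max_le key1 key2

end ODEHelpers

section
open Set

set_option maxHeartbeats 1600000 in
/-- the ODE (5.6)/(5.7): for `K > 0`, `λ > 2`, `a₀ ≥ 0`, the problem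
`a' = −a² + K exp(−λ∫₀ᵗ a)`, `a(0) = a₀` has a unique `C¹` solution on `[0,∞)`; moreover
the solution is nonnegative, bounded, and `a(t) ≤ C/(1+t)`, i.e. `a(t) = O(t^{−1})`. -/
theorem uniform_deformation_ode_global_solution
    (K lam a₀ : ℝ) (hK : 0 < K) (hlam : 2 < lam) (ha₀ : 0 ≤ a₀) :
    ∃ a : ℝ → ℝ,
      -- existence: a C¹ solution on all of [0,∞)
      (a 0 = a₀ ∧ ∀ t : ℝ, 0 ≤ t → HasDerivAt a
        (-(a t) ^ 2 + K * Real.exp (-lam * ∫ s in (0:ℝ)..t, a s)) t) ∧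
      -- uniqueness
      (∀ b : ℝ → ℝ,
        (b 0 = a₀ ∧ ∀ t : ℝ, 0 ≤ t → HasDerivAt b
          (-(b t) ^ 2 + K * Real.exp (-lam * ∫ s in (0:ℝ)..t, b s)) t) →
        ∀ t : ℝ, 0 ≤ t → b t = a t) ∧
      -- nonnegativity
      (∀ t : ℝ, 0 ≤ t → 0 ≤ a t) ∧
      -- boundedness
      (∃ B : ℝ, ∀ t : ℝ, 0 ≤ t → |a t| ≤ B) ∧
      -- decay a(t) = O(t⁻¹)
      (∃ C > (0:ℝ), ∀ t : ℝ, 0 ≤ t → a t ≤ C / (1 + t)) := by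
  have hlam0 : 0 < lam := by linarith
  set M : ℝ := max a₀ (Real.sqrt K) with hM
  have hM0 : 0 ≤ M := le_trans ha₀ (le_max_left _ _)
  have hMK : Real.sqrt K ≤ M := le_max_right _ _
  have hMa : a₀ ≤ M := le_max_left _ _
  have hMsq : K < (M + 1/2)^2 := by
    nlinarith [Real.sq_sqrt hK.le, Real.sqrt_nonneg K]
  set Mc : ℝ := M + 1 with hMc
  have hMc0 : 0 ≤ Mc := by linarith
  obtain ⟨x, hx0, hx⟩ := exists_global K lam Mc hK hlam0 hMc0 (a₀, 0)
  set a : ℝ → ℝ := fun t => (x t).1 with ha_def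
  set I : ℝ → ℝ := fun t => (x t).2 with hI_def
  have ha0 : a 0 = a₀ := by simp only [ha_def, hx0]
  have hI0 : I 0 = 0 := by simp only [hI_def, hx0]
  -- component derivatives
  have hax : ∀ t, HasDerivAt a (-(gcl Mc (a t))^2 + K * Real.exp (-(lam * max (I t) 0))) t := by
    intro t
    have h1 := ((ContinuousLinearMap.fst ℝ ℝ ℝ).hasFDerivAt).comp_hasDerivAt t (hx t)
    exact h1
  have hIx : ∀ t, HasDerivAt I (gcl Mc (a t)) t := by
    intro t
    have h1 := ((ContinuousLinearMap.snd ℝ ℝ ℝ).hasFDerivAt).comp_hasDerivAt t (hx t)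
    exact h1
  have hxc : Continuous x := by
    have : Differentiable ℝ x := fun t => (hx t).differentiableAt
    exact this.continuous
  have hac : Continuous a := continuous_fst.comp hxc
  have hIc : Continuous I := continuous_snd.comp hxc
  -- a priori bounds
  have hlower : ∀ T : ℝ, ∀ u ∈ Set.Icc (0:ℝ) T, 0 ≤ a u := by
    intro T
    apply stay_nonneg (df := fun u => -(gcl Mc (a u))^2 + K * Real.exp (-(lam * max (I u) 0)))
      (fun u _ => hax u) (by rw [ha0]; exact ha₀)
    intro u _ hneg
    have hg : gcl Mc (a u) = 0 := by
      rw [gcl, max_eq_right hneg.le, min_eq_left hMc0]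
    rw [hg]
    have := Real.exp_pos (-(lam * max (I u) 0))
    nlinarith
  have hupper : ∀ T : ℝ, ∀ u ∈ Set.Icc (0:ℝ) T, a u ≤ M + 1/2 := by
    intro T
    have hder : ∀ u ∈ Set.Icc (0:ℝ) T, HasDerivAt (fun u => M + 1/2 - a u)
        ((gcl Mc (a u))^2 - K * Real.exp (-(lam * max (I u) 0))) u := by
      intro u _
      have h2 := (hax u).const_sub (M + 1/2)
      exact h2.congr_deriv (by ring)
    have h0 : (0:ℝ) ≤ M + 1/2 - a 0 := by rw [ha0]; linarith
    have hpos : ∀ u ∈ Set.Icc (0:ℝ) T, M + 1/2 - a u < 0 →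
        0 < (gcl Mc (a u))^2 - K * Real.exp (-(lam * max (I u) 0)) := by
      intro u _ hneg
      have hau : M + 1/2 < a u := by linarith
      have hg : M + 1/2 ≤ gcl Mc (a u) := by
        rw [gcl]
        have h1 : M + 1/2 ≤ max (a u) 0 := le_trans hau.le (le_max_left _ _)
        exact le_min h1 (by rw [hMc]; linarith)
      have he : Real.exp (-(lam * max (I u) 0)) ≤ 1 :=
        Real.exp_le_one_iff.2 (by nlinarith [le_max_right (I u) (0:ℝ)])
      have hgn : 0 ≤ gcl Mc (a u) := gcl_nonneg hMc0
      nlinarith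
    have h := stay_nonneg hder h0 hpos
    intro u hu
    have := h u hu
    linarith
  have hbound : ∀ t : ℝ, 0 ≤ t → 0 ≤ a t ∧ a t ≤ M + 1/2 :=
    fun t ht => ⟨hlower t t ⟨ht, le_rfl⟩, hupper t t ⟨ht, le_rfl⟩⟩
  have hgcl_eq : ∀ t : ℝ, 0 ≤ t → gcl Mc (a t) = a t := by
    intro t ht
    have h := hbound t ht
    rw [gcl, max_eq_left h.1, min_eq_left (by rw [hMc]; linarith [h.2])]
  have hInn : ∀ t : ℝ, 0 ≤ t → 0 ≤ I t := by
    have hmono : MonotoneOn I (Set.Ici 0) := by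
      apply monotoneOn_of_deriv_nonneg (convex_Ici 0) hIc.continuousOn
      · intro u _
        exact ((hIx u).differentiableAt).differentiableWithinAt
      · intro u _
        rw [(hIx u).deriv]
        exact gcl_nonneg hMc0
    intro t ht
    have := hmono Set.self_mem_Ici ht ht
    rwa [hI0] at this
  have hIint : ∀ t : ℝ, 0 ≤ t → I t = ∫ s in (0:ℝ)..t, a s := by
    intro t ht
    have hint : IntervalIntegrable a MeasureTheory.volume 0 t := hac.intervalIntegrable 0 t
    have heq := intervalIntegral.integral_eq_sub_of_hasDerivAt (f := I) (f' := a) ?_ hint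
    · rw [heq, hI0, sub_zero]
    · intro u hu
      rw [Set.uIcc_of_le ht] at hu
      rw [← hgcl_eq u hu.1]
      exact hIx u
  -- the clean derivative statements
  have hI' : ∀ t : ℝ, 0 ≤ t → HasDerivAt I (a t) t := by
    intro t ht
    have := hIx t
    rwa [hgcl_eq t ht] at this
  have hader : ∀ t : ℝ, 0 ≤ t → HasDerivAt a (-(a t)^2 + K * Real.exp (-lam * I t)) t := by
    intro t ht
    have := hax t
    rw [hgcl_eq t ht, max_eq_left (hInn t ht)] at this
    convert this using 3
    ring_nf
  have hamain : ∀ t : ℝ, 0 ≤ t →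
      HasDerivAt a (-(a t) ^ 2 + K * Real.exp (-lam * ∫ s in (0:ℝ)..t, a s)) t := by
    intro t ht
    have := hader t ht
    rwa [hIint t ht] at this
  refine ⟨a, ⟨ha0, hamain⟩, ?_, fun t ht => (hbound t ht).1, ⟨M + 1/2, fun t ht => ?_⟩, ?_⟩
  · -- uniqueness
    rintro b ⟨hb0, hbd⟩ t ht
    have hcb : ∀ u : ℝ, 0 ≤ u → ContinuousAt b u := fun u hu => (hbd u hu).continuousAt
    set bc : ℝ → ℝ := fun s => b (max s 0) with hbc_def
    have hcbc : Continuous bc := by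
      rw [continuous_iff_continuousAt]
      intro s
      have hmax : ContinuousAt (fun s : ℝ => max s 0) s :=
        (continuous_id.max continuous_const).continuousAt
      exact ContinuousAt.comp (g := b) (f := fun s : ℝ => max s 0)
        (hcb _ (le_max_right _ _)) hmax
    set Ib : ℝ → ℝ := fun u => ∫ s in (0:ℝ)..u, bc s with hIb_def
    have hIbd : ∀ u : ℝ, HasDerivAt Ib (bc u) u := fun u =>
      intervalIntegral.integral_hasDerivAt_right (hcbc.intervalIntegrable _ _)
        (hcbc.stronglyMeasurableAtFilter _ _) hcbc.continuousAt
    have hbc_eq : ∀ u : ℝ, 0 ≤ u → bc u = b u := fun u hu => by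
      rw [hbc_def]; simp only; rw [max_eq_left hu]
    have hIb_eq : ∀ u : ℝ, 0 ≤ u → Ib u = ∫ s in (0:ℝ)..u, b s := by
      intro u hu
      apply intervalIntegral.integral_congr
      intro s hs
      rw [Set.uIcc_of_le hu] at hs
      exact hbc_eq s hs.1
    set y : ℝ → ℝ × ℝ := fun u => (b u, Ib u) with hy_def
    set Φ : ℝ × ℝ → ℝ × ℝ := fun p => (-(p.1)^2 + K * Real.exp (-lam * p.2), p.1) with hΦ
    have hyd : ∀ u : ℝ, 0 ≤ u → HasDerivAt y (Φ (y u)) u := by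
      intro u hu
      have h1 : HasDerivAt b (-(b u)^2 + K * Real.exp (-lam * Ib u)) u := by
        have h3 := hbd u hu
        rw [← hIb_eq u hu] at h3
        exact h3
      have h2 : HasDerivAt Ib (b u) u := by
        rw [← hbc_eq u hu]; exact hIbd u
      have h4 := h1.prodMk h2
      convert h4 using 1
    have hxd : ∀ u : ℝ, 0 ≤ u → HasDerivAt x (Φ (x u)) u := by
      intro u hu
      have h5 := hx u
      convert h5 using 1
      show Φ (x u) = Fv K lam Mc (x u)
      rw [hΦ, Fv]
      simp only
      rw [hgcl_eq u hu, max_eq_left (hInn u hu)]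
      norm_num [neg_mul]
      exact ⟨rfl, rfl⟩
    have hyc : ContinuousOn y (Set.Icc 0 t) := by
      intro u hu
      exact ((hcb u hu.1).prodMk (hIbd u).continuousAt).continuousWithinAt
    obtain ⟨ρ1, hρ1⟩ := (isCompact_Icc (a := (0:ℝ)) (b := t)).exists_bound_of_continuousOn hyc
    obtain ⟨ρ2, hρ2⟩ :=
      (isCompact_Icc (a := (0:ℝ)) (b := t)).exists_bound_of_continuousOn hxc.continuousOn
    set ρ := max (max ρ1 ρ2) 0 with hρ
    have hρ0 : 0 ≤ ρ := le_max_right _ _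
    have hyρ : ∀ u ∈ Set.Icc (0:ℝ) t, y u ∈ Metric.closedBall (0:ℝ×ℝ) ρ := fun u hu =>
      mem_closedBall_zero_iff.2 ((hρ1 u hu).trans ((le_max_left _ _).trans (le_max_left _ _)))
    have hxρ : ∀ u ∈ Set.Icc (0:ℝ) t, x u ∈ Metric.closedBall (0:ℝ×ℝ) ρ := fun u hu =>
      mem_closedBall_zero_iff.2 ((hρ2 u hu).trans ((le_max_right _ _).trans (le_max_left _ _)))
    have hlipΦ := Phi_lipschitzOn (K := K) (lam := lam) (ρ := ρ) hK hlam0 hρ0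
    have h0eq : y 0 = x 0 := by
      rw [hy_def, hx0]
      simp only
      rw [hb0, hIb_def]
      simp [intervalIntegral.integral_same]
    have heqOn := ODE_solution_unique_of_mem_Icc_right (v := fun _ p => Φ p)
      (s := fun _ => Metric.closedBall (0:ℝ×ℝ) ρ)
      (K := Real.toNNReal (2*ρ + K*(lam * Real.exp (lam*ρ)) + 1))
      (fun _ _ => hlipΦ) hyc (fun u hu => (hyd u hu.1).hasDerivWithinAt)
      (fun u hu => hyρ u (Set.Ico_subset_Icc_self hu))
      hxc.continuousOn (fun u hu => (hxd u hu.1).hasDerivWithinAt)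
      (fun u hu => hxρ u (Set.Ico_subset_Icc_self hu)) h0eq
    have hte := heqOn (Set.right_mem_Icc.2 ht)
    exact congrArg Prod.fst hte
  · -- boundedness
    rw [abs_of_nonneg (hbound t ht).1]; exact (hbound t ht).2
  · -- decay
    set c' : ℝ := 2*K/(lam - 2) with hc'
    have hc'0 : 0 < c' := by rw [hc']; apply div_pos (by linarith) (by linarith)
    set V : ℝ := Real.sqrt (a₀^2 + c') with hV
    have hV0 : 0 ≤ V := Real.sqrt_nonneg _
    have hVsq : V^2 = a₀^2 + c' := Real.sq_sqrt (by positivity)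
    set ψ : ℝ → ℝ := fun u => a u * Real.exp (I u) with hψ
    have hψc : Continuous ψ := hac.mul (Real.continuous_exp.comp hIc)
    have hψd : ∀ u : ℝ, 0 ≤ u → HasDerivAt ψ (K * Real.exp ((1 - lam) * I u)) u := by
      intro u hu
      have h1 := (hader u hu).mul ((hI' u hu).exp)
      refine h1.congr_deriv (Eq.symm ?_)
      have he : Real.exp (I u) * Real.exp (-lam * I u) = Real.exp ((1 - lam) * I u) := by
        rw [← Real.exp_add]; ring_nf
      linear_combination (-K) * he
    have hWconst : ∀ u : ℝ, 0 ≤ u →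
        (ψ u)^2 + c' * Real.exp ((2 - lam) * I u) = a₀^2 + c' := by
      intro t ht
      set W : ℝ → ℝ := fun u => (ψ u)^2 + c' * Real.exp ((2 - lam) * I u) with hW
      have hWc : ContinuousOn W (Set.Icc 0 t) :=
        (((hψc.pow 2)).add (continuous_const.mul
          (Real.continuous_exp.comp (continuous_const.mul hIc)))).continuousOn
      have hWd : ∀ u ∈ Set.Ico (0:ℝ) t, HasDerivWithinAt W 0 (Set.Ici u) u := by
        intro u hu
        have h2 := (((hI' u hu.1).const_mul (2 - lam)).exp).const_mul c'
        have h3 := ((hψd u hu.1).pow 2).add h2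
        have h4 : HasDerivAt W 0 u := by
          refine h3.congr_deriv (Eq.symm ?_)
          have hc2 : c' * (2 - lam) = -(2*K) := by
            rw [hc', div_mul_eq_mul_div, div_eq_iff (show lam - 2 ≠ 0 by intro h; linarith [sub_eq_zero.1 h])]
            ring
          have he2 : Real.exp (I u) * Real.exp ((1 - lam) * I u)
              = Real.exp ((2 - lam) * I u) := by
            rw [← Real.exp_add]; ring_nf
          simp only [hψ, Nat.cast_ofNat, pow_one]
          linear_combination (-2*K*(a u)) * he2 + (-((a u) * Real.exp ((2-lam)*I u))) * hc2
        exact h4.hasDerivWithinAt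
      have hconst := constant_of_has_deriv_right_zero hWc hWd t (Set.right_mem_Icc.2 ht)
      have hW0 : W 0 = a₀^2 + c' := by
        simp only [hW, hψ]
        rw [ha0, hI0]
        simp
      have hWt : W t = ψ t ^2 + c' * Real.exp ((2-lam)*I t) := rfl
      rw [← hWt, hconst, hW0]
    have hψV : ∀ u : ℝ, 0 ≤ u → ψ u ≤ V := by
      intro u hu
      have h1 := hWconst u hu
      have h2 : 0 < Real.exp ((2 - lam) * I u) := Real.exp_pos _
      have h3 : 0 ≤ ψ u := mul_nonneg (hbound u hu).1 (Real.exp_pos _).le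
      nlinarith
    have hψmono : StrictMonoOn ψ (Set.Ici 0) := by
      apply strictMonoOn_of_deriv_pos (convex_Ici 0) hψc.continuousOn
      intro u hu
      rw [interior_Ici] at hu
      rw [(hψd u (le_of_lt hu)).deriv]
      positivity
    have hψ0 : ψ 0 = a₀ := by
      simp only [hψ]
      rw [ha0, hI0]
      simp
    set δ : ℝ := ψ 1 with hδdef
    have hδ : 0 < δ := by
      have := hψmono Set.self_mem_Ici (Set.mem_Ici.2 zero_le_one) zero_lt_one
      rw [hψ0] at this
      linarith
    have hψδ : ∀ u : ℝ, 1 ≤ u → δ ≤ ψ u := by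
      intro u hu
      rcases eq_or_lt_of_le hu with h | h
      · rw [← h]
      · exact (hψmono (Set.mem_Ici.2 zero_le_one) (Set.mem_Ici.2 (by linarith)) h).le
    have hblin : ∀ u : ℝ, 1 ≤ u → 1 + δ * (u - 1) ≤ Real.exp (I u) := by
      intro t ht
      set φ : ℝ → ℝ := fun u => Real.exp (I u) - δ * (u - 1) with hφ
      have hφc : Continuous φ := (Real.continuous_exp.comp hIc).sub
        (continuous_const.mul (continuous_id.sub continuous_const))
      have hφd : ∀ u : ℝ, 0 ≤ u → HasDerivAt φ (Real.exp (I u) * a u - δ * 1) u := fun u hu =>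
        ((hI' u hu).exp).sub (((hasDerivAt_id u).sub_const 1).const_mul δ)
      have hφmono : MonotoneOn φ (Set.Ici 1) := by
        apply monotoneOn_of_deriv_nonneg (convex_Ici 1) hφc.continuousOn
        · intro u hu
          rw [interior_Ici] at hu
          exact (hφd u (by linarith [Set.mem_Ioi.1 hu])).differentiableAt.differentiableWithinAt
        · intro u hu
          rw [interior_Ici] at hu
          have hu1 : (1:ℝ) ≤ u := le_of_lt hu
          have hu0 : (0:ℝ) ≤ u := by linarith
          rw [(hφd u hu0).deriv]
          have h5 := hψδ u hu1
          simp only [hψ] at h5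
          nlinarith
      have h1 := hφmono Set.self_mem_Ici (Set.mem_Ici.2 ht) ht
      have hI1 : 0 ≤ I 1 := hInn 1 zero_le_one
      have hexp1 : 1 ≤ Real.exp (I 1) := by
        have := Real.add_one_le_exp (I 1)
        linarith
      simp only [hφ] at h1
      nlinarith [h1]
    set c₀ : ℝ := min 1 δ / 2 with hc₀
    have hc₀0 : 0 < c₀ := by
      rw [hc₀]
      exact div_pos (lt_min one_pos hδ) two_pos
    set C : ℝ := max (V / c₀) (2*(M + 1/2)) + 1 with hC
    have hC0 : 0 < C := by
      have h1 : 0 ≤ V / c₀ := by positivity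
      have h2 := le_max_left (V / c₀) (2*(M + 1/2))
      rw [hC]
      linarith
    refine ⟨C, hC0, ?_⟩
    intro t ht
    have h1t : 0 < 1 + t := by linarith
    rw [le_div_iff₀ h1t]
    rcases le_or_gt t 1 with hle | hgt
    · have hb := (hbound t ht).2
      have ha' := (hbound t ht).1
      have hCb := le_max_right (V / c₀) (2*(M + 1/2))
      have hC1 : 2*(M + 1/2) ≤ C := by rw [hC]; linarith
      have hstep : a t * (1 + t) ≤ 2*(M + 1/2) := by nlinarith
      exact hstep.trans hC1
    · have ht1 : 1 ≤ t := hgt.le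
      have h2 : ψ t ≤ V := hψV t ht
      have h3 := hblin t ht1
      have h4 : c₀ * (1 + t) ≤ Real.exp (I t) := by
        have hm1 := min_le_left (1:ℝ) δ
        have hm2 := min_le_right (1:ℝ) δ
        rw [hc₀] at *
        nlinarith
      have ha' := (hbound t ht).1
      have h5 : a t * (c₀ * (1+t)) ≤ a t * Real.exp (I t) := mul_le_mul_of_nonneg_left h4 ha'
      have h6 : a t * Real.exp (I t) ≤ V := h2
      have h7 : a t * (1 + t) * c₀ ≤ V := by nlinarith
      have h8 : a t * (1 + t) ≤ V / c₀ := by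
        rw [le_div_iff₀ hc₀0]
        linarith
      have h9 : V / c₀ ≤ C := by
        have := le_max_left (V / c₀) (2*(M + 1/2))
        rw [hC]
        linarith
      exact h8.trans h9

end
end

section
/- Let n ≥ 1, γ > 1, K₁ > 0, and set λ := (γ−1)n + 2. Let a : [0,∞) → ℝ be a C¹ solution of a'(t) = −a(t)² + K₁ exp(−λ∫₀ᵗ a(s)ds), and set b(t) := exp(∫₀ᵗ a(s)ds). Let ρ₀, p₀ : [0,∞) → ℝ be C¹ radial profiles with ρ₀ ≥ 0 and p₀'(r) = −K₁ r ρ₀(r) for all r ≥ 0. Define on [0,∞) × ℝⁿ: v(t,x) := a(t)x, ρ(t,x) := b(t)^{−n} ρ₀(|x|/b(t)), p(t,x) := b(t)^{−nγ} p₀(|x|/b(t)). Then (ρ, v, p) is a classical solution of the compressible Euler system: ∂_t ρ + div_x(ρv) = 0, ρ(∂_t v + (v·∇_x)v) + ∇_x p = 0, and ∂_t p + (v·∇_x)p + γ p div_x v = 0, pointwise on [0,∞) × ℝⁿ. -/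
open MeasureTheory Real intervalIntegral
open scoped RealInnerProductSpace

section EulerHelpers

open Asymptotics Filter Topology

lemma hasFDerivAt_norm_euc {m : ℕ} {x : EuclideanSpace ℝ (Fin m)} (hx : x ≠ 0) :
    HasFDerivAt (fun y : EuclideanSpace ℝ (Fin m) => ‖y‖) ((‖x‖⁻¹ : ℝ) • innerSL ℝ x) x := by
  have hx2 : (‖x‖ : ℝ)^2 ≠ 0 := pow_ne_zero 2 (norm_ne_zero_iff.mpr hx)
  have h1 : HasFDerivAt (fun y : EuclideanSpace ℝ (Fin m) => ‖y‖^2)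
      ((2:ℕ) • innerSL ℝ x) x := (hasStrictFDerivAt_norm_sq x).hasFDerivAt
  have h2 : HasDerivAt Real.sqrt (1 / (2 * Real.sqrt (‖x‖^2))) (‖x‖^2) :=
    Real.hasDerivAt_sqrt hx2
  have h3 := h2.comp_hasFDerivAt x h1
  have hfun : (Real.sqrt ∘ fun y : EuclideanSpace ℝ (Fin m) => ‖y‖^2)
      = fun y : EuclideanSpace ℝ (Fin m) => ‖y‖ := by
    funext y; simp [Real.sqrt_sq (norm_nonneg y)]
  rw [hfun] at h3
  refine h3.congr_fderiv ?_
  ext w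
  simp [Real.sqrt_sq (norm_nonneg x)]
  field_simp

lemma hasFDerivAt_radial {m : ℕ} {x : EuclideanSpace ℝ (Fin m)} (hx : x ≠ 0)
    {h : ℝ → ℝ} (hh : ContDiff ℝ 1 h) {B : ℝ} (hB : 0 < B) :
    HasFDerivAt (fun y : EuclideanSpace ℝ (Fin m) => h (‖y‖ / B))
      ((deriv h (‖x‖ / B) / (B * ‖x‖)) • innerSL ℝ x) x := by
  have h1 : HasFDerivAt (fun y : EuclideanSpace ℝ (Fin m) => ‖y‖ / B)
      (B⁻¹ • ((‖x‖⁻¹ : ℝ) • innerSL ℝ x)) x := by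
    simpa [div_eq_inv_mul] using (hasFDerivAt_norm_euc hx).const_mul (B⁻¹)
  have h2 : HasDerivAt h (deriv h (‖x‖ / B)) (‖x‖ / B) :=
    ((hh.differentiable one_ne_zero) (‖x‖ / B)).hasDerivAt
  have h3 := h2.comp_hasFDerivAt x h1
  refine h3.congr_fderiv ?_
  ext w
  simp [div_eq_mul_inv]
  ring

lemma hasFDerivAt_radial_zero {m : ℕ} {h : ℝ → ℝ} (hh : HasDerivAt h 0 0) {B : ℝ} (hB : 0 < B) :
    HasFDerivAt (fun y : EuclideanSpace ℝ (Fin m) => h (‖y‖ / B))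
      (0 : EuclideanSpace ℝ (Fin m) →L[ℝ] ℝ) 0 := by
  apply HasFDerivAt.of_isLittleO
  have hcore : (fun s : ℝ => h s - h 0) =o[𝓝 0] fun s => s := by
    simpa using hasDerivAt_iff_isLittleO.mp hh
  have htend : Tendsto (fun y : EuclideanSpace ℝ (Fin m) => ‖y‖ / B) (𝓝 0) (𝓝 0) := by
    have := (continuous_norm.div_const B).tendsto (0 : EuclideanSpace ℝ (Fin m))
    simpa using this
  have hcomp := hcore.comp_tendsto htend
  have hO : (fun y : EuclideanSpace ℝ (Fin m) => ‖y‖ / B) =O[𝓝 0] fun y => y := by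
    rw [isBigO_iff]
    refine ⟨B⁻¹, Eventually.of_forall fun y => ?_⟩
    rw [Real.norm_eq_abs, abs_div, abs_of_pos hB, div_eq_inv_mul, abs_norm]
  have hfin := hcomp.trans_isBigO hO
  have : (fun y : EuclideanSpace ℝ (Fin m) =>
      h (‖y‖ / B) - h (‖(0 : EuclideanSpace ℝ (Fin m))‖ / B)
        - (0 : EuclideanSpace ℝ (Fin m) →L[ℝ] ℝ) (y - 0))
      = fun y => h (‖y‖ / B) - h 0 := by
    funext y; simp
  rw [this]
  simpa [Function.comp_def] using hfin

lemma hasFDerivAt_mul_coord_zero {m : ℕ} {g : EuclideanSpace ℝ (Fin m) → ℝ}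
    (hg : ContinuousAt g 0) (i : Fin m) :
    HasFDerivAt (fun y : EuclideanSpace ℝ (Fin m) => g y * y i)
      (g 0 • (EuclideanSpace.proj i : EuclideanSpace ℝ (Fin m) →L[ℝ] ℝ)) 0 := by
  apply HasFDerivAt.of_isLittleO
  have heq : (fun y : EuclideanSpace ℝ (Fin m) =>
      g y * y i - g 0 * (0 : EuclideanSpace ℝ (Fin m)) i
        - (g 0 • (EuclideanSpace.proj i : EuclideanSpace ℝ (Fin m) →L[ℝ] ℝ)) (y - 0))
      = fun y => (g y - g 0) * y i := by
    funext y; simp; ring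
  rw [show (fun y : EuclideanSpace ℝ (Fin m) =>
      (fun y : EuclideanSpace ℝ (Fin m) => g y * y i) y
        - (fun y : EuclideanSpace ℝ (Fin m) => g y * y i) 0
        - (g 0 • (EuclideanSpace.proj i : EuclideanSpace ℝ (Fin m) →L[ℝ] ℝ)) (y - 0))
      = fun y => (g y - g 0) * y i from heq]
  rw [isLittleO_iff]
  intro c hc
  have h1 : ∀ᶠ y : EuclideanSpace ℝ (Fin m) in 𝓝 0, |g y - g 0| ≤ c := by
    have := hg.tendsto (Metric.ball_mem_nhds (g 0) hc)
    filter_upwards [this] with y hy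
    have : dist (g y) (g 0) < c := hy
    rw [Real.dist_eq] at this
    exact le_of_lt this
  filter_upwards [h1] with y hy
  have h2 : |y i| ≤ ‖y‖ := by
    have := abs_real_inner_le_norm y (EuclideanSpace.single i (1:ℝ))
    simpa [EuclideanSpace.inner_single_right] using this
  have hnm : ‖(g y - g 0) * y i‖ = |g y - g 0| * |y i| := by
    rw [norm_mul]; rfl
  rw [hnm]
  have h3 : ‖y - 0‖ = ‖y‖ := by simp
  rw [h3]
  exact mul_le_mul hy h2 (abs_nonneg _) (le_of_lt hc)

lemma hasDerivAt_rpow_radial {a b : ℝ → ℝ} {t : ℝ} (hbd : HasDerivAt b (a t * b t) t)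
    (hbpos : ∀ s, 0 < b s) (c : ℝ) {h : ℝ → ℝ} (hh : ContDiff ℝ 1 h) (R : ℝ) :
    HasDerivAt (fun s => b s ^ c * h (R / b s))
      (c * a t * b t ^ c * h (R / b t)
        - b t ^ c * deriv h (R / b t) * (R / b t) * a t) t := by
  have hbne : b t ≠ 0 := (hbpos t).ne'
  have h1 : HasDerivAt (fun s => b s ^ c) (c * a t * b t ^ c) t := by
    have := hbd.rpow_const (p := c) (Or.inl hbne)
    convert this using 1
    rw [Real.rpow_sub_one hbne]
    field_simp
  have h2 : HasDerivAt (fun s => R / b s) (-(R / b t) * a t) t := by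
    have := (hbd.inv hbne).const_mul R
    refine this.congr_deriv ?_
    field_simp
  have h3 : HasDerivAt h (deriv h (R / b t)) (R / b t) :=
    ((hh.differentiable one_ne_zero) (R / b t)).hasDerivAt
  have h4 := h3.comp t h2
  have h5 := h1.mul h4
  refine h5.congr_deriv ?_
  simp only [Function.comp_apply]
  field_simp
  ring

end EulerHelpers

/-- Section 5.1, motion with uniform deformation: if `a` solves the ODE
`a' = −a² + K₁exp(−λ∫₀ᵗa)` with `λ = (γ−1)n+2`, `b = exp(∫₀ᵗa)`, and the radial profiles
satisfy the compatibility condition `p₀' = −K₁ r ρ₀`, then `v = a(t)x`,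
`ρ = b^{−n}ρ₀(|x|/b)`, `p = b^{−nγ}p₀(|x|/b)` is a classical solution of the compressible
Euler system on `[0,∞) × ℝⁿ`. -/
theorem uniform_deformation_solves_euler
    (n : ℕ) (hn : 1 ≤ n) (γ K₁ lam : ℝ) (hγ : 1 < γ) (hK₁ : 0 < K₁)
    (hlam : lam = (γ - 1) * n + 2)
    (a b : ℝ → ℝ) (ha_cont : Continuous a)
    (ha : ∀ t : ℝ, 0 ≤ t → HasDerivAt a
      (-(a t) ^ 2 + K₁ * Real.exp (-lam * ∫ s in (0:ℝ)..t, a s)) t)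
    (hb : ∀ t : ℝ, b t = Real.exp (∫ s in (0:ℝ)..t, a s))
    (ρ₀ p₀ : ℝ → ℝ) (hρ₀ : ContDiff ℝ 1 ρ₀) (hp₀ : ContDiff ℝ 1 p₀)
    (hρ₀nonneg : ∀ r : ℝ, 0 ≤ r → 0 ≤ ρ₀ r)
    (hcompat : ∀ r : ℝ, 0 ≤ r → deriv p₀ r = -K₁ * r * ρ₀ r)
    (ρ p : ℝ × EuclideanSpace ℝ (Fin n) → ℝ)
    (v : ℝ × EuclideanSpace ℝ (Fin n) → EuclideanSpace ℝ (Fin n))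
    (hvdef : ∀ q : ℝ × EuclideanSpace ℝ (Fin n), v q = a q.1 • q.2)
    (hρdef : ∀ q : ℝ × EuclideanSpace ℝ (Fin n),
      ρ q = b q.1 ^ (-(n:ℝ)) * ρ₀ (‖q.2‖ / b q.1))
    (hpdef : ∀ q : ℝ × EuclideanSpace ℝ (Fin n),
      p q = b q.1 ^ (-(n:ℝ) * γ) * p₀ (‖q.2‖ / b q.1)) :
    ∀ q : ℝ × EuclideanSpace ℝ (Fin n), 0 ≤ q.1 →
      -- continuity equation
      (pdT ρ q + divX (fun z => ρ z • v z) q = 0) ∧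
      -- momentum equations
      (∀ i, ρ q * (pdT (fun z => v z i) q + ∑ j, v q j * pdX (fun z => v z i) j q)
        + pdX p i q = 0) ∧
      -- pressure equation
      (pdT p q + (∑ i, v q i * pdX p i q) + γ * p q * divX v q = 0) := by
  -- global setup
  have hbpos : ∀ s, 0 < b s := fun s => by rw [hb]; exact Real.exp_pos _
  have hA : ∀ u : ℝ, HasDerivAt (fun w => ∫ s in (0:ℝ)..w, a s) (a u) u := by
    intro u
    exact intervalIntegral.integral_hasDerivAt_right
      (ha_cont.intervalIntegrable 0 u)
      (ha_cont.stronglyMeasurableAtFilter _ _)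
      ha_cont.continuousAt
  have hbd : ∀ u : ℝ, HasDerivAt b (a u * b u) u := by
    intro u
    have h2 : b = fun s => Real.exp (∫ σ in (0:ℝ)..s, a σ) := funext hb
    rw [h2]
    simpa [mul_comm] using (hA u).exp
  have hbrpow : ∀ u : ℝ, ∀ e : ℝ, b u ^ e = Real.exp (e * ∫ s in (0:ℝ)..u, a s) := by
    intro u e
    rw [hb, mul_comm, Real.exp_mul]
  intro q hq
  obtain ⟨t, x⟩ := q
  have ht : (0:ℝ) ≤ t := hq
  set c : ℝ := -(n:ℝ) with hcdef
  set c' : ℝ := -(n:ℝ) * γ with hc'def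
  set B : ℝ := b t with hB
  have hBpos : 0 < B := hbpos t
  have hBne : B ≠ 0 := hBpos.ne'
  set R : ℝ := ‖x‖ with hR
  set r : ℝ := R / B with hrdef
  have hr0 : 0 ≤ r := div_nonneg (norm_nonneg x) hBpos.le
  -- time derivatives
  have hTρ : pdT ρ (t, x) = c * a t * B ^ c * ρ₀ r - B ^ c * deriv ρ₀ r * r * a t := by
    have hfun : (fun s => ρ (s, x)) = fun s => b s ^ c * ρ₀ (‖x‖ / b s) :=
      funext fun s => hρdef (s, x)
    show deriv (fun s => ρ (s, x)) t = _
    rw [hfun]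
    exact (hasDerivAt_rpow_radial (hbd t) hbpos c hρ₀ ‖x‖).deriv
  have hTp : pdT p (t, x) = c' * a t * B ^ c' * p₀ r - B ^ c' * deriv p₀ r * r * a t := by
    have hfun : (fun s => p (s, x)) = fun s => b s ^ c' * p₀ (‖x‖ / b s) :=
      funext fun s => hpdef (s, x)
    show deriv (fun s => p (s, x)) t = _
    rw [hfun]
    exact (hasDerivAt_rpow_radial (hbd t) hbpos c' hp₀ ‖x‖).deriv
  -- ODE for a, in terms of b
  have ha' : HasDerivAt a (-(a t)^2 + K₁ * B ^ (-lam)) t := by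
    have := ha t ht
    rwa [← hbrpow t (-lam)] at this
  -- time derivative of velocity components
  have hTv : ∀ i : Fin n, pdT (fun z => v z i) (t, x)
      = (-(a t)^2 + K₁ * B ^ (-lam)) * x i := by
    intro i
    have hfun : (fun s => v (s, x) i) = fun s => a s * x i := by
      funext s
      rw [hvdef (s, x)]
      simp [PiLp.smul_apply]
    show deriv (fun s => v (s, x) i) t = _
    rw [hfun]
    exact (ha'.mul_const (x i)).deriv
  -- space derivative of velocity components
  have hXv : ∀ i j : Fin n, pdX (fun z => v z i) j (t, x)
      = a t * (if i = j then 1 else 0) := by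
    intro i j
    have hfun : (fun y : EuclideanSpace ℝ (Fin n) => v (t, y) i) = fun y => a t * y i := by
      funext y
      rw [hvdef (t, y)]
      simp [PiLp.smul_apply]
    show fderiv ℝ (fun y => v (t, y) i) x (EuclideanSpace.single j 1) = _
    rw [hfun]
    have hF : HasFDerivAt (fun y : EuclideanSpace ℝ (Fin n) => a t * y i)
        ((a t) • (EuclideanSpace.proj i : EuclideanSpace ℝ (Fin n) →L[ℝ] ℝ)) x := by
      have := (EuclideanSpace.proj (𝕜 := ℝ) i).hasFDerivAt (x := x)
      simpa using this.const_mul (a t)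
    rw [hF.fderiv]
    simp [EuclideanSpace.single_apply]
  have hdivv : divX v (t, x) = n * a t := by
    show (∑ i, pdX (fun z => v z i) i (t, x)) = _
    have : ∀ i : Fin n, pdX (fun z => v z i) i (t, x) = a t := by
      intro i; rw [hXv i i]; simp
    rw [Finset.sum_congr rfl fun i _ => this i]
    simp [mul_comm]
  -- pointwise values
  have hρq : ρ (t, x) = B ^ c * ρ₀ r := by simpa using hρdef (t, x)
  have hpq : p (t, x) = B ^ c' * p₀ r := by simpa using hpdef (t, x)
  have hvq : ∀ i : Fin n, v (t, x) i = a t * x i := by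
    intro i; rw [hvdef (t, x)]; simp [PiLp.smul_apply]
  have hcard : (Finset.univ : Finset (Fin n)).card = n := by simp
  rcases eq_or_ne x 0 with hx0 | hx0
  · -- x = 0
    have hR0 : R = 0 := by rw [hR, hx0, norm_zero]
    have hr0' : r = 0 := by rw [hrdef, hR0, zero_div]
    have hp00 : HasDerivAt p₀ 0 0 := by
      have h1 := ((hp₀.differentiable one_ne_zero) 0).hasDerivAt
      have h2 : deriv p₀ 0 = 0 := by rw [hcompat 0 le_rfl]; ring
      rwa [h2] at h1
    have hXp0 : ∀ i : Fin n, pdX p i (t, x) = 0 := by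
      intro i
      have hfun : (fun y : EuclideanSpace ℝ (Fin n) => p (t, y))
          = fun y => B ^ c' * p₀ (‖y‖ / B) := funext fun y => hpdef (t, y)
      show fderiv ℝ (fun y => p (t, y)) x (EuclideanSpace.single i 1) = 0
      rw [hfun, hx0]
      rw [((hasFDerivAt_radial_zero hp00 hBpos).const_mul (B ^ c')).fderiv]
      simp
    have hgc : ContinuousAt (fun y : EuclideanSpace ℝ (Fin n) => ρ (t, y) * a t) 0 := by
      have hfun : (fun y : EuclideanSpace ℝ (Fin n) => ρ (t, y) * a t)
          = fun y => (B ^ c * ρ₀ (‖y‖ / B)) * a t := funext fun y => by rw [hρdef (t, y)]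
      rw [hfun]
      exact (((continuous_const.mul (hρ₀.continuous.comp
        (continuous_norm.div_const B))).mul continuous_const)).continuousAt
    have hXρv0 : ∀ i : Fin n, pdX (fun z => (ρ z • v z) i) i (t, x) = ρ (t, x) * a t := by
      intro i
      have hfun : (fun y : EuclideanSpace ℝ (Fin n) => (ρ (t, y) • v (t, y)) i)
          = fun y => (ρ (t, y) * a t) * y i := by
        funext y
        rw [hvdef (t, y)]
        simp [PiLp.smul_apply]
        ring
      show fderiv ℝ (fun y => (ρ (t, y) • v (t, y)) i) x (EuclideanSpace.single i 1) = _
      rw [hfun, hx0]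
      rw [(hasFDerivAt_mul_coord_zero hgc i).fderiv]
      simp [hx0]
    refine ⟨?_, ?_, ?_⟩
    · -- continuity
      have hdiv : divX (fun z => ρ z • v z) (t, x) = n * (ρ (t, x) * a t) := by
        show (∑ i, pdX (fun z => (ρ z • v z) i) i (t, x)) = _
        rw [Finset.sum_congr rfl fun i _ => hXρv0 i]
        rw [Finset.sum_const, hcard]
        simp [nsmul_eq_mul]
      rw [hTρ, hdiv, hρq, hr0', hcdef]
      ring
    · -- momentum
      intro i
      have hx0i : x i = 0 := by rw [hx0]; rfl
      rw [hTv i, hXp0 i]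
      have hv0 : ∀ j : Fin n, v (t, x) j = 0 := by
        intro j; rw [hvq j, hx0]; simp
      rw [Finset.sum_congr rfl fun j _ => by rw [hv0 j, zero_mul]]
      simp [hx0i]
    · -- pressure
      rw [hTp, hdivv, hpq, hr0']
      rw [Finset.sum_congr rfl fun i _ => by rw [hXp0 i, mul_zero]]
      rw [Finset.sum_const, hc'def]
      simp only [smul_zero, add_zero]
      ring
  · -- x ≠ 0
    have hRne : R ≠ 0 := by rwa [hR, norm_ne_zero_iff]
    have hinner : ∀ i : Fin n, ⟪x, EuclideanSpace.single i (1:ℝ)⟫ = x i := by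
      intro i
      rw [EuclideanSpace.inner_single_right]
      simp
    have hXp : ∀ i : Fin n, pdX p i (t, x)
        = B ^ c' * (deriv p₀ r / (B * R)) * x i := by
      intro i
      have hfun : (fun y : EuclideanSpace ℝ (Fin n) => p (t, y))
          = fun y => B ^ c' * p₀ (‖y‖ / B) := funext fun y => hpdef (t, y)
      show fderiv ℝ (fun y => p (t, y)) x (EuclideanSpace.single i 1) = _
      rw [hfun]
      rw [((hasFDerivAt_radial hx0 hp₀ hBpos).const_mul (B ^ c')).fderiv]
      simp only [ContinuousLinearMap.smul_apply, innerSL_apply_apply, smul_eq_mul]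
      rw [hinner i]
      ring
    have hF2 : ∀ i : Fin n, HasFDerivAt (fun y : EuclideanSpace ℝ (Fin n) => a t * y i)
        ((a t) • (EuclideanSpace.proj i : EuclideanSpace ℝ (Fin n) →L[ℝ] ℝ)) x := by
      intro i
      have := (EuclideanSpace.proj (𝕜 := ℝ) i).hasFDerivAt (x := x)
      simpa using this.const_mul (a t)
    have hXρv : ∀ i : Fin n, pdX (fun z => (ρ z • v z) i) i (t, x)
        = ρ (t, x) * a t + (a t * (B ^ c * (deriv ρ₀ r / (B * R)))) * x i ^ 2 := by
      intro i
      have hfun : (fun y : EuclideanSpace ℝ (Fin n) => (ρ (t, y) • v (t, y)) i)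
          = fun y => (B ^ c * ρ₀ (‖y‖ / B)) * (a t * y i) := by
        funext y
        rw [hρdef (t, y), hvdef (t, y)]
        simp [PiLp.smul_apply]
        exact Or.inl rfl
      have hF1 : HasFDerivAt (fun y : EuclideanSpace ℝ (Fin n) => B ^ c * ρ₀ (‖y‖ / B))
          ((B ^ c) • ((deriv ρ₀ r / (B * R)) • innerSL ℝ x)) x :=
        (hasFDerivAt_radial hx0 hρ₀ hBpos).const_mul (B ^ c)
      show fderiv ℝ (fun y => (ρ (t, y) • v (t, y)) i) x (EuclideanSpace.single i 1) = _
      rw [hfun]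
      rw [(hF1.fun_mul (hF2 i)).fderiv]
      simp only [ContinuousLinearMap.add_apply, ContinuousLinearMap.smul_apply, smul_eq_mul,
        innerSL_apply_apply]
      rw [hinner i]
      rw [hρq]
      simp [EuclideanSpace.single_apply]
      ring
    have hsum : ∑ i, x i ^ 2 = R ^ 2 := by
      rw [hR, EuclideanSpace.norm_eq, Real.sq_sqrt (by positivity)]
      congr 1
      funext i
      rw [Real.norm_eq_abs, sq_abs]
    refine ⟨?_, ?_, ?_⟩
    · -- continuity
      have hdiv : divX (fun z => ρ z • v z) (t, x)
          = n * (ρ (t, x) * a t) + (a t * (B ^ c * (deriv ρ₀ r / (B * R)))) * R ^ 2 := by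
        show (∑ i, pdX (fun z => (ρ z • v z) i) i (t, x)) = _
        rw [Finset.sum_congr rfl fun i _ => hXρv i]
        rw [Finset.sum_add_distrib, Finset.sum_const, hcard, ← Finset.mul_sum, hsum]
        simp [nsmul_eq_mul]
      rw [hTρ, hdiv, hρq, hrdef, hcdef]
      field_simp
      ring
    · -- momentum
      intro i
      rw [hTv i, hXp i]
      rw [Finset.sum_congr rfl fun j _ => by
        rw [hvq j, hXv i j]]
      have hsum2 : ∑ j, a t * x j * (a t * if i = j then 1 else 0) = a t ^ 2 * x i := by
        rw [Finset.sum_congr rfl fun j _ => by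
          rw [show a t * x j * (a t * if i = j then 1 else 0)
            = (if i = j then a t ^2 * x j else 0) from by split <;> simp <;> ring]]
        rw [Finset.sum_ite_eq]
        simp
      rw [hsum2, hρq, hcompat r hr0]
      have hrel : B ^ c' = B ^ c * B ^ (-lam) * B ^ (2:ℕ) := by
        rw [← Real.rpow_natCast B 2, ← Real.rpow_add hBpos, ← Real.rpow_add hBpos]
        congr 1
        rw [hcdef, hc'def, hlam]
        push_cast
        ring
      rw [hrel, hrdef]
      field_simp
      ring
    · -- pressure
      rw [hTp, hdivv, hpq]
      rw [Finset.sum_congr rfl fun i _ => by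
        rw [hvq i, hXp i,
          show a t * x i * (B ^ c' * (deriv p₀ r / (B * R)) * x i)
            = (a t * (B ^ c' * (deriv p₀ r / (B * R)))) * x i ^ 2 from by ring]]
      rw [← Finset.mul_sum, hsum, hrdef, hc'def]
      field_simp
      ring
end
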